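/- arXiv:1402.1729 — 3 statements merged into one kernel-verified Lean document; each statement's English description precedes it below -/
import Mathlib

section
/- Let n ≥ 1, u, v ∈ ℝ^n, let ψ̂, θ̂ ∈ C_c^∞(ℝ^n) with supp ψ̂ ⊂ {ξ : 1/2 ≤ |ξ| ≤ 2} and supp θ̂ ⊂ {η : |η| ≤ 1/4}, and let m : (0,1] × ℝ^n → ℂ be measurable in t, smooth in x, with sup_{0<t≤1, x∈ℝ^n} |∂_x^γ m(t,x)| ≤ A_γ < ∞ for every multi-index γ. Define λ(x,ξ,η) = ∫_0^1 ψ̂(tξ) e^{i t ξ·v} θ̂(tη) e^{i t η·u} m(t,x) dt/t. Then λ is smooth on ℝ^n × ℝ^n × ℝ^n and belongs to S^0_{1,0}(n,2) with seminorms depending polynomially on |u| and |v|: for all multi-indices α, β, γ there exist a constant C (depending on ψ, θ, the A's, n, α, β, γ) and an integer k ≥ 0 such that |∂_ξ^α ∂_η^β ∂_x^γ λ(x,ξ,η)| ≤ C (1+|u|+|v|)^k (1+|ξ|+|η|)^{−|α|−|β|} for all x, ξ, η. -/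
open MeasureTheory
open scoped ENNReal NNReal

noncomputable section

/-- Euclidean space `ℝ^n`. -/
abbrev En (n : ℕ) : Type := EuclideanSpace ℝ (Fin n)

/-- Partial derivative in the first (spatial) variable of a function of three variables. -/
def pdX {n : ℕ} (i : Fin n) (σ : En n → En n → En n → ℂ) : En n → En n → En n → ℂ :=
  fun x ξ η => fderiv ℝ (fun y => σ y ξ η) x (EuclideanSpace.single i 1)

/-- Partial derivative in the second (first frequency) variable. -/
def pdXi {n : ℕ} (i : Fin n) (σ : En n → En n → En n → ℂ) : En n → En n → En n → ℂ :=
  fun x ξ η => fderiv ℝ (fun ζ => σ x ζ η) ξ (EuclideanSpace.single i 1)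

/-- Partial derivative in the third (second frequency) variable. -/
def pdEta {n : ℕ} (i : Fin n) (σ : En n → En n → En n → ℂ) : En n → En n → En n → ℂ :=
  fun x ξ η => fderiv ℝ (fun ζ => σ x ξ ζ) η (EuclideanSpace.single i 1)

/-- Iterated partial derivative `∂_ξ^α ∂_η^β ∂_x^γ σ`, multi-indices as lists. -/
def mderiv {n : ℕ} (α β γ : List (Fin n)) (σ : En n → En n → En n → ℂ) :
    En n → En n → En n → ℂ :=
  α.foldr pdXi (β.foldr pdEta (γ.foldr pdX σ))

/-- Partial derivative of a one-variable complex function. -/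
def pd1 {n : ℕ} (i : Fin n) (f : En n → ℂ) : En n → ℂ :=
  fun x => fderiv ℝ f x (EuclideanSpace.single i 1)

/-- The paraproduct symbol `λ(x,ξ,η) = ∫_0^1 ψ̂(tξ)e^{itξ·v} θ̂(tη)e^{itη·u} m(t,x) dt/t`. -/
def paraSymbol {n : ℕ} (ψhat θhat : En n → ℂ) (u v : En n) (mfun : ℝ → En n → ℂ)
    (x ξ η : En n) : ℂ :=
  ∫ t in Set.Ioc (0 : ℝ) 1,
    ψhat (t • ξ) * Complex.exp (Complex.I * ((t * (inner ℝ ξ v : ℝ) : ℝ) : ℂ)) *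
      θhat (t • η) * Complex.exp (Complex.I * ((t * (inner ℝ η u : ℝ) : ℝ) : ℂ)) *
      mfun t x / (t : ℂ)

section ParaAux

open MeasureTheory Set Complex Metric Filter
open scoped ENNReal NNReal Topology

namespace Para

variable {n : ℕ}

abbrev PP (n : ℕ) := En n × En n × En n

def ee (i : Fin n) : En n := EuclideanSpace.single i 1

lemma en_sum (w : En n) : w = ∑ i, w i • ee i := by
  ext j
  rw [WithLp.ofLp_sum, Finset.sum_apply]
  simp [ee, EuclideanSpace.single_apply]

def Cx (n : ℕ) : PP n →L[ℝ] En n := ContinuousLinearMap.fst ℝ (En n) (En n × En n)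
def Cxi (n : ℕ) : PP n →L[ℝ] En n :=
  (ContinuousLinearMap.fst ℝ (En n) (En n)).comp (ContinuousLinearMap.snd ℝ (En n) (En n × En n))
def Ceta (n : ℕ) : PP n →L[ℝ] En n :=
  (ContinuousLinearMap.snd ℝ (En n) (En n)).comp (ContinuousLinearMap.snd ℝ (En n) (En n × En n))

@[simp] lemma Cx_apply (p : PP n) : Cx n p = p.1 := rfl
@[simp] lemma Cxi_apply (p : PP n) : Cxi n p = p.2.1 := rfl
@[simp] lemma Ceta_apply (p : PP n) : Ceta n p = p.2.2 := rfl

def TX (i : Fin n) : PP n →L[ℝ] ℂ := Complex.ofRealCLM.comp ((EuclideanSpace.proj i).comp (Cx n))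
def TXi (i : Fin n) : PP n →L[ℝ] ℂ := Complex.ofRealCLM.comp ((EuclideanSpace.proj i).comp (Cxi n))
def TEta (i : Fin n) : PP n →L[ℝ] ℂ := Complex.ofRealCLM.comp ((EuclideanSpace.proj i).comp (Ceta n))

@[simp] lemma TX_apply (i : Fin n) (p : PP n) : TX i p = (p.1 i : ℂ) := rfl
@[simp] lemma TXi_apply (i : Fin n) (p : PP n) : TXi i p = (p.2.1 i : ℂ) := rfl
@[simp] lemma TEta_apply (i : Fin n) (p : PP n) : TEta i p = (p.2.2 i : ℂ) := rfl

def eX (i : Fin n) : PP n := (ee i, 0, 0)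
def eXi (i : Fin n) : PP n := (0, ee i, 0)
def eEta (i : Fin n) : PP n := (0, 0, ee i)

lemma pp_sum (w : PP n) :
    w = (∑ i, w.1 i • eX i) + (∑ i, w.2.1 i • eXi i) + (∑ i, w.2.2 i • eEta i) := by
  have h1 : w.1 = ∑ i, w.1 i • ee i := en_sum w.1
  have h2 : w.2.1 = ∑ i, w.2.1 i • ee i := en_sum w.2.1
  have h3 : w.2.2 = ∑ i, w.2.2 i • ee i := en_sum w.2.2
  refine Prod.ext ?_ (Prod.ext ?_ ?_) <;>
    simp [eX, eXi, eEta, Prod.fst_sum, Prod.snd_sum] <;> first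
      | exact h1 | exact h2 | exact h3

lemma basisCLM (L : PP n →L[ℝ] ℂ) :
    L = (∑ i, L (eX i) • TX i) + (∑ i, L (eXi i) • TXi i) + (∑ i, L (eEta i) • TEta i) := by
  apply ContinuousLinearMap.ext
  intro w
  conv_lhs => rw [pp_sum w]
  simp only [map_add, map_sum, _root_.map_smul, ContinuousLinearMap.add_apply,
    ContinuousLinearMap.sum_apply, ContinuousLinearMap.smul_apply, TX_apply, TXi_apply,
    TEta_apply, eX, eXi, eEta, smul_eq_mul, Complex.real_smul]
  simp [Complex.real_smul, mul_comm]


def μ01 : Measure ℝ := volume.restrict (Set.Ioc (0:ℝ) 1)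

lemma dirDeriv_contDiff {f : En n → ℂ} (hf : ContDiff ℝ (⊤:ℕ∞) f) (i : Fin n) :
    ContDiff ℝ (⊤:ℕ∞) (fun ζ => fderiv ℝ f ζ (EuclideanSpace.single i 1)) := by
  have h1 : ContDiff ℝ (⊤:ℕ∞) (fderiv ℝ f) := (contDiff_infty_iff_fderiv.mp hf).2
  exact ((ContinuousLinearMap.apply ℝ ℂ (EuclideanSpace.single i 1)).contDiff).comp h1

lemma fderiv_zero_on_open {f : En n → ℂ} {s : Set (En n)} (hs : IsOpen s)
    (h0 : ∀ ζ ∈ s, f ζ = 0) {ζ : En n} (hζ : ζ ∈ s) : fderiv ℝ f ζ = 0 := by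
  have he : f =ᶠ[nhds ζ] fun _ => (0:ℂ) :=
    Filter.eventuallyEq_of_mem (hs.mem_nhds hζ) h0
  rw [he.fderiv_eq]
  exact fderiv_const_apply 0

lemma bound_of_supp {f : En n → ℂ} (hf : Continuous f) {r : ℝ}
    (h0 : ∀ ζ : En n, r < ‖ζ‖ → f ζ = 0) : ∃ B : ℝ, 0 ≤ B ∧ ∀ ζ, ‖f ζ‖ ≤ B := by
  have hcs : HasCompactSupport f := by
    apply HasCompactSupport.intro (isCompact_closedBall (0 : En n) r)
    intro ζ hζ
    exact h0 ζ (by simpa [mem_closedBall, dist_zero_right, not_le] using hζ)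
  obtain ⟨C, hC⟩ := hcs.exists_bound_of_continuous hf
  exact ⟨max C 0, le_max_right _ _, fun ζ => le_trans (hC ζ) (le_max_left _ _)⟩

lemma aesm_pd1 {M : ℝ → En n → ℂ}
    (hM : ∀ x, AEStronglyMeasurable (fun t => M t x) μ01)
    (hMs : ∀ t ∈ Set.Ioc (0:ℝ) 1, ContDiff ℝ (⊤:ℕ∞) (M t)) (i : Fin n) (x : En n) :
    AEStronglyMeasurable (fun t => pd1 i (M t) x) μ01 := by
  apply aestronglyMeasurable_of_tendsto_ae (u := atTop)
    (f := fun (k : ℕ) t => (((k:ℝ)+1)) • (M t (x + ((k:ℝ)+1)⁻¹ • ee i) - M t x))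
  · intro k
    exact ((hM _).sub (hM x)).const_smul (((k:ℝ)+1))
  · filter_upwards [ae_restrict_mem measurableSet_Ioc] with t ht
    have hd : HasDerivAt (fun h : ℝ => M t (x + h • ee i)) (pd1 i (M t) x) 0 := by
      have hf : HasFDerivAt (M t) (fderiv ℝ (M t) x) x :=
        (((hMs t ht).differentiable (by simp)) x).hasFDerivAt
      have hc : HasDerivAt (fun h : ℝ => x + h • ee i) (ee i) 0 := by
        simpa using ((hasDerivAt_id (0:ℝ)).smul_const (ee i)).const_add x
      have hx0 : x + (0:ℝ) • ee i = x := by simp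
      have hcomp := HasFDerivAt.comp_hasDerivAt 0 (hx0.symm ▸ hf) hc
      simpa [pd1, ee, Function.comp_def] using hcomp
    rw [hasDerivAt_iff_tendsto_slope] at hd
    have hseq : Tendsto (fun k : ℕ => ((k:ℝ)+1)⁻¹) atTop (𝓝[≠] (0:ℝ)) := by
      apply tendsto_nhdsWithin_of_tendsto_nhds_of_eventually_within
      · exact tendsto_inv_atTop_zero.comp
          (tendsto_atTop_add_const_right _ 1 tendsto_natCast_atTop_atTop)
      · filter_upwards with k
        simp only [Set.mem_compl_iff, Set.mem_singleton_iff]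
        positivity
    have := hd.comp hseq
    apply Tendsto.congr _ this
    intro k
    show slope (fun h : ℝ => M t (x + h • ee i)) 0 (((k:ℝ)+1)⁻¹) = _
    rw [slope_def_module]
    simp [inv_inv]


structure Amp (n : ℕ) : Type where
  N : ℕ
  c : ℂ
  Φ : En n → ℂ
  Θ : En n → ℂ
  M : ℝ → En n → ℂ
  hΦ : ContDiff ℝ (⊤:ℕ∞) Φ
  hΦs : ∀ ζ : En n, ‖ζ‖ < 1/2 ∨ 2 < ‖ζ‖ → Φ ζ = 0
  hΘ : ContDiff ℝ (⊤:ℕ∞) Θ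
  hΘs : ∀ ζ : En n, 1/4 < ‖ζ‖ → Θ ζ = 0
  hM : ∀ x, AEStronglyMeasurable (fun t => M t x) μ01
  hMs : ∀ t ∈ Set.Ioc (0:ℝ) 1, ContDiff ℝ (⊤:ℕ∞) (M t)
  hMb : ∀ γ : List (Fin n), ∃ A : ℝ, ∀ t ∈ Set.Ioc (0:ℝ) 1, ∀ x, ‖(γ.foldr pd1 (M t)) x‖ ≤ A

variable (u v : En n)

def Amp.F (u v : En n) (d : Amp n) (t : ℝ) (p : PP n) : ℂ :=
  d.c * (t:ℂ) ^ d.N / (t:ℂ) * d.Φ (t • p.2.1)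
    * Complex.exp (Complex.I * ((t * (inner ℝ v p.2.1 : ℝ) : ℝ) : ℂ))
    * d.Θ (t • p.2.2)
    * Complex.exp (Complex.I * ((t * (inner ℝ u p.2.2 : ℝ) : ℝ) : ℂ))
    * d.M t p.1

def Amp.fn (u v : En n) (d : Amp n) (p : PP n) : ℂ := ∫ t, d.F u v t p ∂μ01

def Amp.fn3 (u v : En n) (d : Amp n) : En n → En n → En n → ℂ :=
  fun x ξ η => d.fn u v (x, ξ, η)

/-! derived amplitudes -/

def Amp.dx (d : Amp n) (i : Fin n) : Amp n where
  N := d.N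
  c := d.c
  Φ := d.Φ
  Θ := d.Θ
  M := fun t x => pd1 i (d.M t) x
  hΦ := d.hΦ
  hΦs := d.hΦs
  hΘ := d.hΘ
  hΘs := d.hΘs
  hM := fun x => aesm_pd1 d.hM d.hMs i x
  hMs := fun t ht => dirDeriv_contDiff (d.hMs t ht) i
  hMb := fun γ => by simpa [List.foldr_append] using d.hMb (γ ++ [i])

lemma isOpen_annulus_compl : IsOpen {ζ : En n | ‖ζ‖ < 1/2 ∨ 2 < ‖ζ‖} := by
  have h1 : IsOpen {ζ : En n | ‖ζ‖ < 1/2} := isOpen_lt continuous_norm continuous_const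
  have h2 : IsOpen {ζ : En n | 2 < ‖ζ‖} := isOpen_lt continuous_const continuous_norm
  exact h1.union h2

lemma isOpen_ball_compl : IsOpen {ζ : En n | 1/4 < ‖ζ‖} :=
  isOpen_lt continuous_const continuous_norm

def Amp.dxiA (d : Amp n) (i : Fin n) : Amp n where
  N := d.N + 1
  c := d.c
  Φ := fun ζ => fderiv ℝ d.Φ ζ (EuclideanSpace.single i 1)
  Θ := d.Θ
  M := d.M
  hΦ := dirDeriv_contDiff d.hΦ i
  hΦs := by
    intro ζ hζ
    show (fderiv ℝ d.Φ ζ) (EuclideanSpace.single i 1) = 0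
    rw [fderiv_zero_on_open isOpen_annulus_compl (fun ζ h => d.hΦs ζ h) hζ]
    simp
  hΘ := d.hΘ
  hΘs := d.hΘs
  hM := d.hM
  hMs := d.hMs
  hMb := d.hMb

def Amp.dxiB (v : En n) (d : Amp n) (i : Fin n) : Amp n where
  N := d.N + 1
  c := d.c * (Complex.I * ((inner ℝ v (ee i) : ℝ) : ℂ))
  Φ := d.Φ
  Θ := d.Θ
  M := d.M
  hΦ := d.hΦ
  hΦs := d.hΦs
  hΘ := d.hΘ
  hΘs := d.hΘs
  hM := d.hM
  hMs := d.hMs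
  hMb := d.hMb

def Amp.detaA (d : Amp n) (i : Fin n) : Amp n where
  N := d.N + 1
  c := d.c
  Φ := d.Φ
  Θ := fun ζ => fderiv ℝ d.Θ ζ (EuclideanSpace.single i 1)
  M := d.M
  hΦ := d.hΦ
  hΦs := d.hΦs
  hΘ := dirDeriv_contDiff d.hΘ i
  hΘs := by
    intro ζ hζ
    show (fderiv ℝ d.Θ ζ) (EuclideanSpace.single i 1) = 0
    rw [fderiv_zero_on_open isOpen_ball_compl (fun ζ h => d.hΘs ζ h) hζ]
    simp
  hM := d.hM
  hMs := d.hMs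
  hMb := d.hMb

def Amp.detaB (u : En n) (d : Amp n) (i : Fin n) : Amp n where
  N := d.N + 1
  c := d.c * (Complex.I * ((inner ℝ u (ee i) : ℝ) : ℂ))
  Φ := d.Φ
  Θ := d.Θ
  M := d.M
  hΦ := d.hΦ
  hΦs := d.hΦs
  hΘ := d.hΘ
  hΘs := d.hΘs
  hM := d.hM
  hMs := d.hMs
  hMb := d.hMb

/-! basic estimates -/

lemma norm_exp_I_mul (r : ℝ) : ‖Complex.exp (Complex.I * r)‖ = 1 := by
  rw [mul_comm]
  simpa using Complex.norm_exp_ofReal_mul_I r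

lemma Amp.F_zero_Φ (d : Amp n) {t : ℝ} (ht : 0 < t) {p : PP n}
    (h : t * ‖p.2.1‖ < 1/2 ∨ 2 < t * ‖p.2.1‖) : d.F u v t p = 0 := by
  have hn : ‖t • p.2.1‖ = t * ‖p.2.1‖ := by
    rw [norm_smul, Real.norm_eq_abs, abs_of_pos ht]
  have : d.Φ (t • p.2.1) = 0 := d.hΦs _ (by rwa [hn])
  simp [Amp.F, this]

lemma Amp.F_zero_Θ (d : Amp n) {t : ℝ} (ht : 0 < t) {p : PP n}
    (h : 1/4 < t * ‖p.2.2‖) : d.F u v t p = 0 := by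
  have hn : ‖t • p.2.2‖ = t * ‖p.2.2‖ := by
    rw [norm_smul, Real.norm_eq_abs, abs_of_pos ht]
  have : d.Θ (t • p.2.2) = 0 := d.hΘs _ (by rwa [hn])
  simp [Amp.F, this]

lemma Amp.F_norm_eq (d : Amp n) {t : ℝ} (ht : 0 < t) (p : PP n) :
    ‖d.F u v t p‖ = ‖d.c‖ * t ^ d.N / t * ‖d.Φ (t • p.2.1)‖ * ‖d.Θ (t • p.2.2)‖
      * ‖d.M t p.1‖ := by
  rw [Amp.F]
  rw [norm_mul, norm_mul, norm_mul, norm_mul, norm_mul, norm_div, norm_mul, norm_pow]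
  rw [norm_exp_I_mul, norm_exp_I_mul, Complex.norm_real, Real.norm_eq_abs, abs_of_pos ht]
  ring

set_option maxHeartbeats 1000000 in
lemma Amp.F_bound (d : Amp n) : ∃ K : ℝ, 0 ≤ K ∧ ∀ t ∈ Set.Ioc (0:ℝ) 1, ∀ p : PP n,
    ‖d.F u v t p‖ ≤ K * t ^ d.N / t := by
  obtain ⟨BΦ, hBΦ0, hBΦ⟩ := bound_of_supp d.hΦ.continuous (r := 2)
    (fun ζ h => d.hΦs ζ (Or.inr h))
  obtain ⟨BΘ, hBΘ0, hBΘ⟩ := bound_of_supp d.hΘ.continuous (r := 1/4)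
    (fun ζ h => d.hΘs ζ h)
  obtain ⟨A, hA⟩ := d.hMb []
  refine ⟨‖d.c‖ * BΦ * BΘ * max A 0, by positivity, ?_⟩
  intro t ht p
  have ht0 : 0 < t := ht.1
  calc ‖d.F u v t p‖
      = ‖d.c‖ * t ^ d.N / t * ‖d.Φ (t • p.2.1)‖ * ‖d.Θ (t • p.2.2)‖ * ‖d.M t p.1‖ :=
        d.F_norm_eq u v ht0 p
    _ ≤ ‖d.c‖ * t ^ d.N / t * BΦ * BΘ * max A 0 := by
        have hM' : ‖d.M t p.1‖ ≤ max A 0 := le_trans (hA t ht p.1) (le_max_left _ _)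
        have hpos : 0 ≤ ‖d.c‖ * t ^ d.N / t := by positivity
        gcongr
        all_goals first | exact hBΦ _ | exact hBΘ _ | exact hM'
    _ = ‖d.c‖ * BΦ * BΘ * max A 0 * t ^ d.N / t := by ring

instance : IsFiniteMeasure (μ01 : Measure ℝ) := by
  constructor
  rw [μ01, Measure.restrict_apply_univ, Real.volume_Ioc]
  exact ENNReal.ofReal_lt_top

lemma Amp.F_aesm (d : Amp n) (p : PP n) :
    AEStronglyMeasurable (fun t => d.F u v t p) μ01 := by
  have m1 : Measurable fun t : ℝ => d.c * (t:ℂ) ^ d.N / (t:ℂ) := by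
    have : Measurable fun t : ℝ => (t : ℂ) := Complex.measurable_ofReal
    exact (measurable_const.mul (this.pow_const _)).div this
  have m2 : Continuous fun t : ℝ => d.Φ (t • p.2.1) :=
    d.hΦ.continuous.comp (continuous_id.smul continuous_const)
  have m3 : Continuous fun t : ℝ =>
      Complex.exp (Complex.I * ((t * (inner ℝ v p.2.1 : ℝ) : ℝ) : ℂ)) := by
    apply Complex.continuous_exp.comp
    exact continuous_const.mul (Complex.continuous_ofReal.comp
      (continuous_id.mul continuous_const))
  have m4 : Continuous fun t : ℝ => d.Θ (t • p.2.2) :=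
    d.hΘ.continuous.comp (continuous_id.smul continuous_const)
  have m5 : Continuous fun t : ℝ =>
      Complex.exp (Complex.I * ((t * (inner ℝ u p.2.2 : ℝ) : ℝ) : ℂ)) := by
    apply Complex.continuous_exp.comp
    exact continuous_const.mul (Complex.continuous_ofReal.comp
      (continuous_id.mul continuous_const))
  exact (((((m1.aestronglyMeasurable.mul m2.aestronglyMeasurable).mul
    m3.aestronglyMeasurable).mul m4.aestronglyMeasurable).mul
    m5.aestronglyMeasurable).mul (d.hM p.1))

lemma Amp.F_integrable (d : Amp n) (p : PP n) :
    Integrable (fun t => d.F u v t p) μ01 := by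
  obtain ⟨K, hK0, hK⟩ := d.F_bound u v
  apply Integrable.mono' (g := fun _ => K * (2 * ‖p.2.1‖)) (integrable_const _)
    (d.F_aesm u v p)
  filter_upwards [ae_restrict_mem measurableSet_Ioc] with t ht
  by_cases hsmall : t * ‖p.2.1‖ < 1/2
  · rw [d.F_zero_Φ u v ht.1 (Or.inl hsmall)]
    simp only [norm_zero]
    positivity
  · push_neg at hsmall
    have hξ : 0 < ‖p.2.1‖ := by nlinarith [ht.1, ht.2, norm_nonneg p.2.1]
    calc ‖d.F u v t p‖ ≤ K * t ^ d.N / t := hK t ht p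
      _ ≤ K * 1 / t := by
          have h1 : K * t ^ d.N ≤ K * 1 :=
            mul_le_mul_of_nonneg_left (pow_le_one₀ (le_of_lt ht.1) ht.2) hK0
          rw [div_le_div_iff₀ ht.1 ht.1]
          nlinarith [h1, ht.1]
      _ ≤ K * (2 * ‖p.2.1‖) := by
          rw [mul_one, div_le_iff₀ ht.1]
          have h2 : 1 ≤ 2 * ‖p.2.1‖ * t := by nlinarith
          nlinarith
  -- done

lemma Amp.fn_zero (d : Amp n) {p : PP n} (h : ‖p.2.1‖ < 1/2) : d.fn u v p = 0 := by
  have : ∀ t ∈ Set.Ioc (0:ℝ) 1, d.F u v t p = 0 := by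
    intro t ht
    apply d.F_zero_Φ u v ht.1
    left
    calc t * ‖p.2.1‖ ≤ 1 * ‖p.2.1‖ := by
          gcongr; exact ht.2
      _ < 1/2 := by simpa using h
  rw [Amp.fn, μ01, setIntegral_congr_fun measurableSet_Ioc this]
  simp

lemma Amp.fn_bound (d : Amp n) : ∃ C : ℝ, 0 ≤ C ∧ ∀ p : PP n,
    ‖d.fn u v p‖ ≤ C * ((1 + ‖p.2.1‖ + ‖p.2.2‖) ^ d.N)⁻¹ := by
  obtain ⟨K, hK0, hK⟩ := d.F_bound u v
  refine ⟨3 * K * 4 ^ d.N, by positivity, ?_⟩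
  intro p
  set s : ℝ := ‖p.2.1‖ + ‖p.2.2‖ with hs
  have hs0 : (0:ℝ) < 1 + s := by positivity
  by_cases hξ : ‖p.2.1‖ < 1/2
  · rw [d.fn_zero u v hξ]
    simp only [norm_zero]
    positivity
  · push_neg at hξ
    have hξ0 : 0 < ‖p.2.1‖ := lt_of_lt_of_le (by norm_num) hξ
    set a : ℝ := 1 / (2 * ‖p.2.1‖) with ha
    have ha0 : 0 < a := by positivity
    set D : ℝ := K * (4 * (1 + s)⁻¹) ^ d.N * (2 * ‖p.2.1‖) with hD
    have hD0 : 0 ≤ D := by positivity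
    have hbd : ∀ᵐ t ∂μ01, ‖d.F u v t p‖ ≤ (Set.Icc a (4*a)).indicator (fun _ => D) t := by
      filter_upwards [ae_restrict_mem measurableSet_Ioc] with t ht
      by_cases hz : d.F u v t p = 0
      · rw [hz, norm_zero]
        exact Set.indicator_nonneg (fun _ _ => hD0) t
      · -- support information
        have h1 : 1/2 ≤ t * ‖p.2.1‖ ∧ t * ‖p.2.1‖ ≤ 2 := by
          by_contra hcon
          rw [not_and_or] at hcon
          apply hz
          apply d.F_zero_Φ u v ht.1
          rcases hcon with h | h
          · exact Or.inl (by push_neg at h; exact h)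
          · exact Or.inr (by push_neg at h; exact h)
        have h2 : t * ‖p.2.2‖ ≤ 1/4 := by
          by_contra hcon
          push_neg at hcon
          exact hz (d.F_zero_Θ u v ht.1 hcon)
        have hx2 : (0:ℝ) < 2 * ‖p.2.1‖ := by positivity
        have htIcc : t ∈ Set.Icc a (4*a) := by
          constructor
          · rw [ha, div_le_iff₀ hx2]
            nlinarith [h1.1]
          · have h4a : 4 * a = 2 / ‖p.2.1‖ := by rw [ha]; field_simp; ring
            rw [h4a, le_div_iff₀ hξ0]
            nlinarith [h1.2]
        rw [Set.indicator_of_mem htIcc]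
        have htle : t ≤ 4 * (1 + s)⁻¹ := by
          have h4 : 4 * (1+s)⁻¹ = 4 / (1+s) := by rw [div_eq_mul_inv]
          rw [h4, le_div_iff₀ hs0]
          have hexp : t * (1+s) = t + t * ‖p.2.1‖ + t * ‖p.2.2‖ := by rw [hs]; ring
          linarith [ht.2, h1.2, h2]
        have hinv : t⁻¹ ≤ 2 * ‖p.2.1‖ := by
          rw [← one_div, div_le_iff₀ ht.1]
          nlinarith [h1.1]
        calc ‖d.F u v t p‖ ≤ K * t ^ d.N / t := hK t ht p
          _ = K * t ^ d.N * t⁻¹ := by ring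
          _ ≤ K * (4 * (1 + s)⁻¹) ^ d.N * (2 * ‖p.2.1‖) := by
              have h1' : K * t ^ d.N ≤ K * (4 * (1 + s)⁻¹) ^ d.N :=
                mul_le_mul_of_nonneg_left (pow_le_pow_left₀ (le_of_lt ht.1) htle _) hK0
              exact mul_le_mul h1' hinv (inv_nonneg.mpr (le_of_lt ht.1))
                (mul_nonneg hK0 (by positivity))
          _ = D := rfl
    have hind : Integrable ((Set.Icc a (4*a)).indicator (fun _ => D)) μ01 := by
      apply Integrable.indicator (integrable_const _) measurableSet_Icc
    calc ‖d.fn u v p‖ ≤ ∫ t, (Set.Icc a (4*a)).indicator (fun _ => D) t ∂μ01 :=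
          norm_integral_le_of_norm_le hind hbd
      _ = (μ01 (Set.Icc a (4*a))).toReal * D := by
          rw [integral_indicator_const _ measurableSet_Icc]
          simp [smul_eq_mul, Measure.real]
      _ ≤ 3 * a * D := by
          gcongr ?_ * D
          have hle : μ01 (Set.Icc a (4*a)) ≤ ENNReal.ofReal (4*a - a) := by
            rw [μ01]
            calc volume.restrict (Set.Ioc (0:ℝ) 1) (Set.Icc a (4*a))
                ≤ volume (Set.Icc a (4*a)) := by
                  rw [Measure.restrict_apply measurableSet_Icc]
                  exact measure_mono Set.inter_subset_left
              _ = ENNReal.ofReal (4*a - a) := Real.volume_Icc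
          calc (μ01 (Set.Icc a (4*a))).toReal ≤ (ENNReal.ofReal (4*a-a)).toReal := by
                exact ENNReal.toReal_mono (by simp) hle
            _ = 4*a - a := by rw [ENNReal.toReal_ofReal (by nlinarith)]
            _ = 3 * a := by ring
      _ = 3 * K * 4 ^ d.N * ((1 + s) ^ d.N)⁻¹ := by
          rw [hD, ha, mul_pow, inv_pow]
          have hx : (‖p.2.1‖ : ℝ) ≠ 0 := ne_of_gt hξ0
          have hy : ((1+s) ^ d.N : ℝ) ≠ 0 := by positivity
          have hx' : (‖p.2.1‖ : ℝ) ≠ 0 := ne_of_gt hξ0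
          field_simp
      _ = 3 * K * 4 ^ d.N * ((1 + ‖p.2.1‖ + ‖p.2.2‖) ^ d.N)⁻¹ := by
          rw [hs]
          ring_nf

/-! the derivative CLM of the integrand, and of the integral -/

lemma CLM_eq_of_basis {L L' : PP n →L[ℝ] ℂ} (h1 : ∀ i, L (eX i) = L' (eX i))
    (h2 : ∀ i, L (eXi i) = L' (eXi i)) (h3 : ∀ i, L (eEta i) = L' (eEta i)) : L = L' := by
  rw [basisCLM L, basisCLM L']
  simp only [h1, h2, h3]

def Amp.F' (u v : En n) (d : Amp n) (t : ℝ) (p : PP n) : PP n →L[ℝ] ℂ :=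
  (∑ i, ((d.dx i).F u v t p) • TX i)
  + (∑ i, (((d.dxiA i).F u v t p) + ((d.dxiB v i).F u v t p)) • TXi i)
  + (∑ i, (((d.detaA i).F u v t p) + ((d.detaB u i).F u v t p)) • TEta i)

def Amp.D (u v : En n) (d : Amp n) (p : PP n) : PP n →L[ℝ] ℂ :=
  (∑ i, ((d.dx i).fn u v p) • TX i)
  + (∑ i, (((d.dxiA i).fn u v p) + ((d.dxiB v i).fn u v p)) • TXi i)
  + (∑ i, (((d.detaA i).fn u v p) + ((d.detaB u i).fn u v p)) • TEta i)

@[simp] lemma eX_1 (i : Fin n) : (eX i).1 = ee i := rfl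
@[simp] lemma eX_21 (i : Fin n) : (eX i).2.1 = 0 := rfl
@[simp] lemma eX_22 (i : Fin n) : (eX i).2.2 = 0 := rfl
@[simp] lemma eXi_1 (i : Fin n) : (eXi i).1 = 0 := rfl
@[simp] lemma eXi_21 (i : Fin n) : (eXi i).2.1 = ee i := rfl
@[simp] lemma eXi_22 (i : Fin n) : (eXi i).2.2 = 0 := rfl
@[simp] lemma eEta_1 (i : Fin n) : (eEta i).1 = 0 := rfl
@[simp] lemma eEta_21 (i : Fin n) : (eEta i).2.1 = 0 := rfl
@[simp] lemma eEta_22 (i : Fin n) : (eEta i).2.2 = ee i := rfl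

@[simp] lemma ee_apply (i j : Fin n) : ee i j = if j = i then (1:ℝ) else 0 := by
  simp [ee, EuclideanSpace.single_apply]

@[simp] lemma en_zero_apply (j : Fin n) : (0 : En n) j = 0 := rfl

lemma Amp.F'_apply_eX (d : Amp n) (t : ℝ) (p : PP n) (i : Fin n) :
    d.F' u v t p (eX i) = (d.dx i).F u v t p := by
  simp [Amp.F', Finset.sum_ite_eq', Finset.sum_ite_eq, smul_eq_mul, mul_ite, mul_one, mul_zero,
    apply_ite (Complex.ofReal)]

lemma Amp.F'_apply_eXi (d : Amp n) (t : ℝ) (p : PP n) (i : Fin n) :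
    d.F' u v t p (eXi i) = (d.dxiA i).F u v t p + (d.dxiB v i).F u v t p := by
  simp [Amp.F', Finset.sum_ite_eq', Finset.sum_ite_eq, smul_eq_mul, mul_ite, mul_one, mul_zero,
    apply_ite (Complex.ofReal)]

lemma Amp.F'_apply_eEta (d : Amp n) (t : ℝ) (p : PP n) (i : Fin n) :
    d.F' u v t p (eEta i) = (d.detaA i).F u v t p + (d.detaB u i).F u v t p := by
  simp [Amp.F', Finset.sum_ite_eq', Finset.sum_ite_eq, smul_eq_mul, mul_ite, mul_one, mul_zero,
    apply_ite (Complex.ofReal)]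

lemma Amp.D_apply_eX (d : Amp n) (p : PP n) (i : Fin n) :
    d.D u v p (eX i) = (d.dx i).fn u v p := by
  simp [Amp.D, Finset.sum_ite_eq', Finset.sum_ite_eq, smul_eq_mul, mul_ite, mul_one, mul_zero,
    apply_ite (Complex.ofReal)]

lemma Amp.D_apply_eXi (d : Amp n) (p : PP n) (i : Fin n) :
    d.D u v p (eXi i) = (d.dxiA i).fn u v p + (d.dxiB v i).fn u v p := by
  simp [Amp.D, Finset.sum_ite_eq', Finset.sum_ite_eq, smul_eq_mul, mul_ite, mul_one, mul_zero,
    apply_ite (Complex.ofReal)]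

lemma Amp.D_apply_eEta (d : Amp n) (p : PP n) (i : Fin n) :
    d.D u v p (eEta i) = (d.detaA i).fn u v p + (d.detaB u i).fn u v p := by
  simp [Amp.D, Finset.sum_ite_eq', Finset.sum_ite_eq, smul_eq_mul, mul_ite, mul_one, mul_zero,
    apply_ite (Complex.ofReal)]

lemma Amp.F'_zero (d : Amp n) {t : ℝ} (ht : 0 < t) {p : PP n}
    (h : t * ‖p.2.1‖ < 1/2) : d.F' u v t p = 0 := by
  have h1 : ∀ (e : Amp n), e.F u v t p = 0 := fun e => e.F_zero_Φ u v ht (Or.inl h)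
  apply ContinuousLinearMap.ext
  intro w
  simp [Amp.F', h1, ContinuousLinearMap.sum_apply, ContinuousLinearMap.smul_apply,
    ContinuousLinearMap.add_apply]

lemma Amp.F'_aesm (d : Amp n) (p : PP n) :
    AEStronglyMeasurable (fun t => d.F' u v t p) μ01 := by
  apply AEStronglyMeasurable.add
  apply AEStronglyMeasurable.add
  · apply Finset.aestronglyMeasurable_fun_sum
    intro i _
    exact ((d.dx i).F_aesm u v p).smul aestronglyMeasurable_const
  · apply Finset.aestronglyMeasurable_fun_sum
    intro i _
    exact (((d.dxiA i).F_aesm u v p).add ((d.dxiB v i).F_aesm u v p)).smul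
      aestronglyMeasurable_const
  · apply Finset.aestronglyMeasurable_fun_sum
    intro i _
    exact (((d.detaA i).F_aesm u v p).add ((d.detaB u i).F_aesm u v p)).smul
      aestronglyMeasurable_const

lemma Amp.F'_bound (d : Amp n) : ∃ B : ℝ, 0 ≤ B ∧ ∀ t ∈ Set.Ioc (0:ℝ) 1, ∀ p : PP n,
    ‖d.F' u v t p‖ ≤ B / t := by
  choose K1 hK10 hK1 using fun i => (d.dx i).F_bound u v
  choose K2 hK20 hK2 using fun i => (d.dxiA i).F_bound u v
  choose K3 hK30 hK3 using fun i => (d.dxiB v i).F_bound u v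
  choose K4 hK40 hK4 using fun i => (d.detaA i).F_bound u v
  choose K5 hK50 hK5 using fun i => (d.detaB u i).F_bound u v
  refine ⟨(∑ i, K1 i * ‖TX (n := n) i‖) + (∑ i, (K2 i + K3 i) * ‖TXi (n := n) i‖)
    + (∑ i, (K4 i + K5 i) * ‖TEta (n := n) i‖),
    add_nonneg (add_nonneg
      (Finset.sum_nonneg fun i _ => mul_nonneg (hK10 i) (norm_nonneg _))
      (Finset.sum_nonneg fun i _ => mul_nonneg (add_nonneg (hK20 i) (hK30 i)) (norm_nonneg _)))
      (Finset.sum_nonneg fun i _ => mul_nonneg (add_nonneg (hK40 i) (hK50 i)) (norm_nonneg _)),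
    ?_⟩
  intro t ht p
  have ht0 : 0 < t := ht.1
  have hFle : ∀ (e : Amp n) (K : ℝ), 0 ≤ K →
      (∀ t ∈ Set.Ioc (0:ℝ) 1, ∀ p : PP n, ‖e.F u v t p‖ ≤ K * t ^ e.N / t) →
      ‖e.F u v t p‖ ≤ K / t := by
    intro e K hK0 hK
    calc ‖e.F u v t p‖ ≤ K * t ^ e.N / t := hK t ht p
      _ ≤ K * 1 / t := by
          have h1 : K * t ^ e.N ≤ K * 1 :=
            mul_le_mul_of_nonneg_left (pow_le_one₀ (le_of_lt ht0) ht.2) hK0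
          rw [div_le_div_iff₀ ht0 ht0]
          nlinarith [h1, ht0]
      _ = K / t := by rw [mul_one]
  rw [Amp.F', add_div, add_div]
  apply le_trans (norm_add₃_le)
  gcongr
  · apply le_trans (norm_sum_le _ _)
    rw [Finset.sum_div]
    apply Finset.sum_le_sum
    intro i _
    apply le_trans (ContinuousLinearMap.opNorm_smul_le _ _)
    calc ‖(d.dx i).F u v t p‖ * ‖TX (n := n) i‖ ≤ (K1 i / t) * ‖TX (n := n) i‖ := by
          gcongr
          exact hFle _ _ (hK10 i) (hK1 i)
      _ = K1 i * ‖TX (n := n) i‖ / t := by ring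
  · apply le_trans (norm_sum_le _ _)
    rw [Finset.sum_div]
    apply Finset.sum_le_sum
    intro i _
    apply le_trans (ContinuousLinearMap.opNorm_smul_le _ _)
    calc ‖(d.dxiA i).F u v t p + (d.dxiB v i).F u v t p‖ * ‖TXi (n := n) i‖
        ≤ ((K2 i + K3 i) / t) * ‖TXi (n := n) i‖ := by
          gcongr
          calc ‖(d.dxiA i).F u v t p + (d.dxiB v i).F u v t p‖
              ≤ ‖(d.dxiA i).F u v t p‖ + ‖(d.dxiB v i).F u v t p‖ := norm_add_le _ _
            _ ≤ K2 i / t + K3 i / t := by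
                gcongr
                exacts [hFle _ _ (hK20 i) (hK2 i), hFle _ _ (hK30 i) (hK3 i)]
            _ = (K2 i + K3 i) / t := by ring
      _ = (K2 i + K3 i) * ‖TXi (n := n) i‖ / t := by ring
  · apply le_trans (norm_sum_le _ _)
    rw [Finset.sum_div]
    apply Finset.sum_le_sum
    intro i _
    apply le_trans (ContinuousLinearMap.opNorm_smul_le _ _)
    calc ‖(d.detaA i).F u v t p + (d.detaB u i).F u v t p‖ * ‖TEta (n := n) i‖
        ≤ ((K4 i + K5 i) / t) * ‖TEta (n := n) i‖ := by
          gcongr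
          calc ‖(d.detaA i).F u v t p + (d.detaB u i).F u v t p‖
              ≤ ‖(d.detaA i).F u v t p‖ + ‖(d.detaB u i).F u v t p‖ := norm_add_le _ _
            _ ≤ K4 i / t + K5 i / t := by
                gcongr
                exacts [hFle _ _ (hK40 i) (hK4 i), hFle _ _ (hK50 i) (hK5 i)]
            _ = (K4 i + K5 i) / t := by ring
      _ = (K4 i + K5 i) * ‖TEta (n := n) i‖ / t := by ring

lemma Amp.integral_F' (d : Amp n) (p : PP n) :
    ∫ t, d.F' u v t p ∂μ01 = d.D u v p := by
  have i1 : ∀ i : Fin n, Integrable (fun t => ((d.dx i).F u v t p) • TX (n := n) i) μ01 :=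
    fun i => ((d.dx i).F_integrable u v p).smul_const _
  have i2 : ∀ i : Fin n, Integrable
      (fun t => (((d.dxiA i).F u v t p) + ((d.dxiB v i).F u v t p)) • TXi (n := n) i) μ01 :=
    fun i => (((d.dxiA i).F_integrable u v p).add ((d.dxiB v i).F_integrable u v p)).smul_const _
  have i3 : ∀ i : Fin n, Integrable
      (fun t => (((d.detaA i).F u v t p) + ((d.detaB u i).F u v t p)) • TEta (n := n) i) μ01 :=
    fun i => (((d.detaA i).F_integrable u v p).add ((d.detaB u i).F_integrable u v p)).smul_const _
  have e1 : (fun t => d.F' u v t p) = fun t =>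
      (∑ i, ((d.dx i).F u v t p) • TX (n := n) i)
      + ((∑ i, (((d.dxiA i).F u v t p) + ((d.dxiB v i).F u v t p)) • TXi (n := n) i)
      + (∑ i, (((d.detaA i).F u v t p) + ((d.detaB u i).F u v t p)) • TEta (n := n) i)) := by
    funext t
    rw [Amp.F']
    abel
  rw [e1]
  have I1 : Integrable (fun t => ∑ i : Fin n, ((d.dx i).F u v t p) • TX (n := n) i) μ01 :=
    integrable_finset_sum Finset.univ
      (f := fun i t => ((d.dx i).F u v t p) • TX (n := n) i) (fun i _ => i1 i)
  have I2 : Integrable (fun t => ∑ i : Fin n,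
      (((d.dxiA i).F u v t p) + ((d.dxiB v i).F u v t p)) • TXi (n := n) i) μ01 :=
    integrable_finset_sum Finset.univ
      (f := fun i t => (((d.dxiA i).F u v t p) + ((d.dxiB v i).F u v t p)) • TXi (n := n) i)
      (fun i _ => i2 i)
  have I3 : Integrable (fun t => ∑ i : Fin n,
      (((d.detaA i).F u v t p) + ((d.detaB u i).F u v t p)) • TEta (n := n) i) μ01 :=
    integrable_finset_sum Finset.univ
      (f := fun i t => (((d.detaA i).F u v t p) + ((d.detaB u i).F u v t p)) • TEta (n := n) i)
      (fun i _ => i3 i)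
  have I23 : Integrable (fun t =>
      (∑ i : Fin n, (((d.dxiA i).F u v t p) + ((d.dxiB v i).F u v t p)) • TXi (n := n) i)
      + ∑ i : Fin n, (((d.detaA i).F u v t p) + ((d.detaB u i).F u v t p)) • TEta (n := n) i)
      μ01 := Integrable.fun_add (ε' := PP n →L[ℝ] ℂ) I2 I3
  rw [integral_add I1 I23, integral_add I2 I3]
  rw [integral_finset_sum Finset.univ
      (f := fun i t => ((d.dx i).F u v t p) • TX (n := n) i) (fun i _ => i1 i),
    integral_finset_sum Finset.univ
      (f := fun i t => (((d.dxiA i).F u v t p) + ((d.dxiB v i).F u v t p)) • TXi (n := n) i)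
      (fun i _ => i2 i),
    integral_finset_sum Finset.univ
      (f := fun i t => (((d.detaA i).F u v t p) + ((d.detaB u i).F u v t p)) • TEta (n := n) i)
      (fun i _ => i3 i)]
  rw [Amp.D]
  rw [add_assoc]
  congr 1
  · apply Finset.sum_congr rfl
    intro i _
    rw [integral_smul_const]
    rfl
  congr 1
  · apply Finset.sum_congr rfl
    intro i _
    rw [integral_smul_const]
    rw [integral_add ((d.dxiA i).F_integrable u v p) ((d.dxiB v i).F_integrable u v p)]
    rfl
  · apply Finset.sum_congr rfl
    intro i _
    rw [integral_smul_const]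
    rw [integral_add ((d.detaA i).F_integrable u v p) ((d.detaB u i).F_integrable u v p)]
    rfl

set_option maxHeartbeats 1000000 in
lemma Amp.hasFDerivAt_F (d : Amp n) {t : ℝ} (ht : t ∈ Set.Ioc (0:ℝ) 1) (p : PP n) :
    HasFDerivAt (fun q => d.F u v t q) (d.F' u v t p) p := by
  have hdiffΦ := d.hΦ.differentiable (by simp)
  have hdiffΘ := d.hΘ.differentiable (by simp)
  have hdiffM := (d.hMs t ht).differentiable (by simp)
  have hsm1 : HasFDerivAt (fun q : PP n => t • q.2.1) (t • Cxi n) p :=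
    ((Cxi n).hasFDerivAt).const_smul t
  have hsm2 : HasFDerivAt (fun q : PP n => t • q.2.2) (t • Ceta n) p :=
    ((Ceta n).hasFDerivAt).const_smul t
  have hΦd : HasFDerivAt (fun q : PP n => d.Φ (t • q.2.1))
      ((fderiv ℝ d.Φ (t • p.2.1)).comp (t • Cxi n)) p :=
    ((hdiffΦ (t • p.2.1)).hasFDerivAt).comp p hsm1
  have hΘd : HasFDerivAt (fun q : PP n => d.Θ (t • q.2.2))
      ((fderiv ℝ d.Θ (t • p.2.2)).comp (t • Ceta n)) p :=
    ((hdiffΘ (t • p.2.2)).hasFDerivAt).comp p hsm2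
  have hfun1 : ⇑((innerSL ℝ v).comp (Cxi n)) = fun q : PP n => (inner ℝ v q.2.1 : ℝ) := by
    funext q; simp
  have hfun2 : ⇑((innerSL ℝ u).comp (Ceta n)) = fun q : PP n => (inner ℝ u q.2.2 : ℝ) := by
    funext q; simp
  have hE1 : HasFDerivAt
      (fun q : PP n => Complex.exp (Complex.I * ((t * (inner ℝ v q.2.1 : ℝ) : ℝ) : ℂ)))
      (Complex.exp (Complex.I * ((t * (inner ℝ v p.2.1 : ℝ) : ℝ) : ℂ)) •
        (Complex.I • (Complex.ofRealCLM.comp (t • ((innerSL ℝ v).comp (Cxi n)))))) p := by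
    have h0 : HasFDerivAt (fun q : PP n => (inner ℝ v q.2.1 : ℝ))
        ((innerSL ℝ v).comp (Cxi n)) p := by
      rw [← hfun1]; exact ((innerSL ℝ v).comp (Cxi n)).hasFDerivAt
    have h1 := h0.const_mul t
    have h2 : HasFDerivAt (fun q : PP n => ((t * (inner ℝ v q.2.1 : ℝ) : ℝ) : ℂ))
        (Complex.ofRealCLM.comp (t • ((innerSL ℝ v).comp (Cxi n)))) p :=
      (Complex.ofRealCLM.hasFDerivAt).comp p h1
    exact (h2.const_mul Complex.I).cexp
  have hE2 : HasFDerivAt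
      (fun q : PP n => Complex.exp (Complex.I * ((t * (inner ℝ u q.2.2 : ℝ) : ℝ) : ℂ)))
      (Complex.exp (Complex.I * ((t * (inner ℝ u p.2.2 : ℝ) : ℝ) : ℂ)) •
        (Complex.I • (Complex.ofRealCLM.comp (t • ((innerSL ℝ u).comp (Ceta n)))))) p := by
    have h0 : HasFDerivAt (fun q : PP n => (inner ℝ u q.2.2 : ℝ))
        ((innerSL ℝ u).comp (Ceta n)) p := by
      rw [← hfun2]; exact ((innerSL ℝ u).comp (Ceta n)).hasFDerivAt
    have h1 := h0.const_mul t
    have h2 : HasFDerivAt (fun q : PP n => ((t * (inner ℝ u q.2.2 : ℝ) : ℝ) : ℂ))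
        (Complex.ofRealCLM.comp (t • ((innerSL ℝ u).comp (Ceta n)))) p :=
      (Complex.ofRealCLM.hasFDerivAt).comp p h1
    exact (h2.const_mul Complex.I).cexp
  have hMd : HasFDerivAt (fun q : PP n => d.M t q.1)
      ((fderiv ℝ (d.M t) p.1).comp (Cx n)) p :=
    ((hdiffM p.1).hasFDerivAt).comp p (Cx n).hasFDerivAt
  have hΦK := hΦd.const_mul (d.c * (t:ℂ) ^ d.N / (t:ℂ))
  have H := (((hΦK.mul hE1).mul hΘd).mul hE2).mul hMd
  refine H.congr_fderiv (Eq.symm ?_)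
  refine CLM_eq_of_basis (fun i => ?_) (fun i => ?_) (fun i => ?_) <;>
    [rw [Amp.F'_apply_eX]; rw [Amp.F'_apply_eXi]; rw [Amp.F'_apply_eEta]] <;>
    simp only [ContinuousLinearMap.add_apply, ContinuousLinearMap.smul_apply,
      ContinuousLinearMap.comp_apply, ContinuousLinearMap.coe_smul', Pi.smul_apply,
      Cx_apply, Cxi_apply, Ceta_apply, eX_1, eX_21, eX_22, eXi_1, eXi_21, eXi_22,
      eEta_1, eEta_21, eEta_22, smul_zero, map_zero, smul_eq_mul, mul_zero, zero_mul,
      add_zero, zero_add, Complex.real_smul, Complex.ofRealCLM_apply, innerSL_apply_apply,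
      inner_zero_right, Complex.ofReal_zero, Complex.ofReal_mul, _root_.map_smul,
      Amp.F, Amp.dx, Amp.dxiA, Amp.dxiB, Amp.detaA, Amp.detaB, pd1, ee, pow_succ, Pi.mul_apply] <;>
    push_cast <;>
    ring

lemma Amp.hasFDerivAt_fn (d : Amp n) (p₀ : PP n) :
    HasFDerivAt (d.fn u v) (d.D u v p₀) p₀ := by
  by_cases hξ : ‖p₀.2.1‖ < 1/2
  · -- locally zero
    have hε : (0:ℝ) < 1/2 - ‖p₀.2.1‖ := by linarith
    have hsub : ∀ p : PP n, p ∈ ball p₀ (1/2 - ‖p₀.2.1‖) → ‖p.2.1‖ < 1/2 := by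
      intro p hp
      have h1 : ‖p.2.1 - p₀.2.1‖ ≤ ‖p - p₀‖ :=
        le_trans (norm_fst_le ((p - p₀).2)) (norm_snd_le (p - p₀))
      have h2 : ‖p - p₀‖ < 1/2 - ‖p₀.2.1‖ := by
        rw [← dist_eq_norm]; exact mem_ball.mp hp
      calc ‖p.2.1‖ ≤ ‖p₀.2.1‖ + ‖p.2.1 - p₀.2.1‖ := by
            have := norm_add_le (p₀.2.1) (p.2.1 - p₀.2.1)
            simpa using this
        _ < 1/2 := by linarith
    have hz : d.fn u v =ᶠ[nhds p₀] fun _ => (0:ℂ) :=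
      Filter.eventuallyEq_of_mem (ball_mem_nhds p₀ hε)
        (fun p hp => d.fn_zero u v (hsub p hp))
    have hD : d.D u v p₀ = 0 := by
      have h1 : ∀ (e : Amp n), e.fn u v p₀ = 0 := fun e => e.fn_zero u v hξ
      apply ContinuousLinearMap.ext
      intro w
      simp [Amp.D, h1, ContinuousLinearMap.sum_apply, ContinuousLinearMap.smul_apply,
        ContinuousLinearMap.add_apply]
    rw [hD]
    exact (hasFDerivAt_const (0:ℂ) p₀).congr_of_eventuallyEq hz
  · push_neg at hξ
    obtain ⟨B, hB0, hB⟩ := d.F'_bound u v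
    set R : ℝ := ‖p₀.2.1‖ + 1 with hR
    have hR0 : (0:ℝ) < R := by positivity
    have key : HasFDerivAt (fun p : PP n => ∫ t, d.F u v t p ∂μ01)
        (∫ t, d.F' u v t p₀ ∂μ01) p₀ := by
      apply hasFDerivAt_integral_of_dominated_of_fderiv_le
        (F := fun (p : PP n) t => d.F u v t p) (F' := fun (p : PP n) t => d.F' u v t p)
        (bound := fun _ => B * (2 * R)) (s := ball p₀ (1/8)) (ball_mem_nhds p₀ (by norm_num))
      · filter_upwards with p using d.F_aesm u v p
      · exact d.F_integrable u v p₀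
      · exact d.F'_aesm u v p₀
      · filter_upwards [ae_restrict_mem measurableSet_Ioc] with t ht p hp
        have hpR : ‖p.2.1‖ ≤ R := by
          have h1 : ‖p.2.1 - p₀.2.1‖ ≤ ‖p - p₀‖ :=
            le_trans (norm_fst_le ((p - p₀).2)) (norm_snd_le (p - p₀))
          have h2 : ‖p - p₀‖ < 1/8 := by
            rw [← dist_eq_norm]; exact mem_ball.mp hp
          have h3 : ‖p.2.1‖ ≤ ‖p₀.2.1‖ + ‖p.2.1 - p₀.2.1‖ := by
            have := norm_add_le (p₀.2.1) (p.2.1 - p₀.2.1)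
            simpa using this
          rw [hR]; linarith
        by_cases hts : t * ‖p.2.1‖ < 1/2
        · rw [d.F'_zero u v ht.1 hts]
          simp only [norm_zero]
          positivity
        · push_neg at hts
          calc ‖d.F' u v t p‖ ≤ B / t := hB t ht p
            _ ≤ B * (2 * R) := by
                rw [div_le_iff₀ ht.1]
                have h4 : 1 ≤ 2 * R * t := by nlinarith [ht.1, norm_nonneg p.2.1]
                nlinarith [hB0]
      · exact integrable_const _
      · filter_upwards [ae_restrict_mem measurableSet_Ioc] with t ht p _
        exact d.hasFDerivAt_F u v ht p
    rw [d.integral_F' u v p₀] at key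
    exact key

lemma Amp.hasFDerivAt_partial_x (d : Amp n) (x ξ η : En n) :
    HasFDerivAt (fun y => d.fn3 u v y ξ η)
      ((d.D u v (x, ξ, η)).comp ((ContinuousLinearMap.id ℝ (En n)).prod 0)) x := by
  have hinc : HasFDerivAt (fun y : En n => ((y, ξ, η) : PP n))
      ((ContinuousLinearMap.id ℝ (En n)).prod 0) x :=
    HasFDerivAt.prodMk (hasFDerivAt_id x) (hasFDerivAt_const (ξ, η) x)
  exact (d.hasFDerivAt_fn u v (x, ξ, η)).comp x hinc

lemma Amp.hasFDerivAt_partial_xi (d : Amp n) (x ξ η : En n) :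
    HasFDerivAt (fun ζ => d.fn3 u v x ζ η)
      ((d.D u v (x, ξ, η)).comp
        ((0 : En n →L[ℝ] En n).prod ((ContinuousLinearMap.id ℝ (En n)).prod 0))) ξ := by
  have hinc : HasFDerivAt (fun ζ : En n => ((x, ζ, η) : PP n))
      ((0 : En n →L[ℝ] En n).prod ((ContinuousLinearMap.id ℝ (En n)).prod 0)) ξ :=
    HasFDerivAt.prodMk (hasFDerivAt_const x ξ) (HasFDerivAt.prodMk (hasFDerivAt_id ξ) (hasFDerivAt_const η ξ))
  exact (d.hasFDerivAt_fn u v (x, ξ, η)).comp ξ hinc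

lemma Amp.hasFDerivAt_partial_eta (d : Amp n) (x ξ η : En n) :
    HasFDerivAt (fun ζ => d.fn3 u v x ξ ζ)
      ((d.D u v (x, ξ, η)).comp
        ((0 : En n →L[ℝ] En n).prod ((0 : En n →L[ℝ] En n).prod
          (ContinuousLinearMap.id ℝ (En n))))) η := by
  have hinc : HasFDerivAt (fun ζ : En n => ((x, ξ, ζ) : PP n))
      ((0 : En n →L[ℝ] En n).prod ((0 : En n →L[ℝ] En n).prod
        (ContinuousLinearMap.id ℝ (En n)))) η :=
    HasFDerivAt.prodMk (hasFDerivAt_const x η) (HasFDerivAt.prodMk (hasFDerivAt_const ξ η) (hasFDerivAt_id η))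
  exact (d.hasFDerivAt_fn u v (x, ξ, η)).comp η hinc

lemma Amp.pdX_fn3 (d : Amp n) (i : Fin n) :
    pdX i (d.fn3 u v) = (d.dx i).fn3 u v := by
  funext x ξ η
  have H := d.hasFDerivAt_partial_x u v x ξ η
  show fderiv ℝ (fun y => d.fn3 u v y ξ η) x (EuclideanSpace.single i 1) = _
  rw [H.fderiv]
  have h3 : ((ContinuousLinearMap.id ℝ (En n)).prod (0 : En n →L[ℝ] En n × En n))
      (EuclideanSpace.single i 1) = eX i := rfl
  rw [ContinuousLinearMap.comp_apply, h3, Amp.D_apply_eX]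
  rfl

lemma Amp.pdXi_fn3 (d : Amp n) (i : Fin n) :
    pdXi i (d.fn3 u v) = fun x ξ η =>
      (d.dxiA i).fn3 u v x ξ η + (d.dxiB v i).fn3 u v x ξ η := by
  funext x ξ η
  have H := d.hasFDerivAt_partial_xi u v x ξ η
  show fderiv ℝ (fun ζ => d.fn3 u v x ζ η) ξ (EuclideanSpace.single i 1) = _
  rw [H.fderiv]
  have h3 : ((0 : En n →L[ℝ] En n).prod ((ContinuousLinearMap.id ℝ (En n)).prod
      (0 : En n →L[ℝ] En n))) (EuclideanSpace.single i 1) = eXi i := rfl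
  rw [ContinuousLinearMap.comp_apply, h3, Amp.D_apply_eXi]
  rfl

lemma Amp.pdEta_fn3 (d : Amp n) (i : Fin n) :
    pdEta i (d.fn3 u v) = fun x ξ η =>
      (d.detaA i).fn3 u v x ξ η + (d.detaB u i).fn3 u v x ξ η := by
  funext x ξ η
  have H := d.hasFDerivAt_partial_eta u v x ξ η
  show fderiv ℝ (fun ζ => d.fn3 u v x ξ ζ) η (EuclideanSpace.single i 1) = _
  rw [H.fderiv]
  have h3 : ((0 : En n →L[ℝ] En n).prod ((0 : En n →L[ℝ] En n).prod
      (ContinuousLinearMap.id ℝ (En n)))) (EuclideanSpace.single i 1) = eEta i := rfl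
  rw [ContinuousLinearMap.comp_apply, h3, Amp.D_apply_eEta]
  rfl

/-! sums of amplitudes -/

lemma Amp.diffAt_x (d : Amp n) (x ξ η : En n) :
    DifferentiableAt ℝ (fun y => d.fn3 u v y ξ η) x :=
  (d.hasFDerivAt_partial_x u v x ξ η).differentiableAt

lemma Amp.diffAt_xi (d : Amp n) (x ξ η : En n) :
    DifferentiableAt ℝ (fun ζ => d.fn3 u v x ζ η) ξ :=
  (d.hasFDerivAt_partial_xi u v x ξ η).differentiableAt

lemma Amp.diffAt_eta (d : Amp n) (x ξ η : En n) :
    DifferentiableAt ℝ (fun ζ => d.fn3 u v x ξ ζ) η :=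
  (d.hasFDerivAt_partial_eta u v x ξ η).differentiableAt

lemma diffAt_list_sum_x (l : List (Amp n)) (x ξ η : En n) :
    DifferentiableAt ℝ (fun y => (l.map (fun d => d.fn3 u v y ξ η)).sum) x := by
  induction l with
  | nil => simp only [List.map_nil, List.sum_nil]; exact differentiableAt_const 0
  | cons d l ih =>
    simp only [List.map_cons, List.sum_cons]
    exact (d.diffAt_x u v x ξ η).add ih

lemma diffAt_list_sum_xi (l : List (Amp n)) (x ξ η : En n) :
    DifferentiableAt ℝ (fun ζ => (l.map (fun d => d.fn3 u v x ζ η)).sum) ξ := by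
  induction l with
  | nil => simp only [List.map_nil, List.sum_nil]; exact differentiableAt_const 0
  | cons d l ih =>
    simp only [List.map_cons, List.sum_cons]
    exact (d.diffAt_xi u v x ξ η).add ih

lemma diffAt_list_sum_eta (l : List (Amp n)) (x ξ η : En n) :
    DifferentiableAt ℝ (fun ζ => (l.map (fun d => d.fn3 u v x ξ ζ)).sum) η := by
  induction l with
  | nil => simp only [List.map_nil, List.sum_nil]; exact differentiableAt_const 0
  | cons d l ih =>
    simp only [List.map_cons, List.sum_cons]
    exact (d.diffAt_eta u v x ξ η).add ih

lemma pdX_list_sum (l : List (Amp n)) (i : Fin n) :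
    pdX i (fun x ξ η => (l.map (fun d => d.fn3 u v x ξ η)).sum)
      = fun x ξ η => (l.map (fun d => (d.dx i).fn3 u v x ξ η)).sum := by
  induction l with
  | nil =>
    funext x ξ η
    simp [pdX]
  | cons d l ih =>
    funext x ξ η
    simp only [List.map_cons, List.sum_cons]
    show fderiv ℝ (fun y => d.fn3 u v y ξ η + (l.map (fun e => e.fn3 u v y ξ η)).sum) x
      (EuclideanSpace.single i 1) = _
    rw [fderiv_fun_add (d.diffAt_x u v x ξ η) (diffAt_list_sum_x u v l x ξ η)]
    rw [ContinuousLinearMap.add_apply]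
    congr 1
    · have h := congrFun (congrFun (congrFun (d.pdX_fn3 u v i) x) ξ) η
      exact h
    · exact congrFun (congrFun (congrFun ih x) ξ) η

lemma pdXi_list_sum (l : List (Amp n)) (i : Fin n) :
    pdXi i (fun x ξ η => (l.map (fun d => d.fn3 u v x ξ η)).sum)
      = fun x ξ η => (l.map (fun d =>
          (d.dxiA i).fn3 u v x ξ η + (d.dxiB v i).fn3 u v x ξ η)).sum := by
  induction l with
  | nil =>
    funext x ξ η
    simp [pdXi]
  | cons d l ih =>
    funext x ξ η
    simp only [List.map_cons, List.sum_cons]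
    show fderiv ℝ (fun ζ => d.fn3 u v x ζ η + (l.map (fun e => e.fn3 u v x ζ η)).sum) ξ
      (EuclideanSpace.single i 1) = _
    rw [fderiv_fun_add (d.diffAt_xi u v x ξ η) (diffAt_list_sum_xi u v l x ξ η)]
    rw [ContinuousLinearMap.add_apply]
    congr 1
    · exact congrFun (congrFun (congrFun (d.pdXi_fn3 u v i) x) ξ) η
    · exact congrFun (congrFun (congrFun ih x) ξ) η

lemma pdEta_list_sum (l : List (Amp n)) (i : Fin n) :
    pdEta i (fun x ξ η => (l.map (fun d => d.fn3 u v x ξ η)).sum)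
      = fun x ξ η => (l.map (fun d =>
          (d.detaA i).fn3 u v x ξ η + (d.detaB u i).fn3 u v x ξ η)).sum := by
  induction l with
  | nil =>
    funext x ξ η
    simp [pdEta]
  | cons d l ih =>
    funext x ξ η
    simp only [List.map_cons, List.sum_cons]
    show fderiv ℝ (fun ζ => d.fn3 u v x ξ ζ + (l.map (fun e => e.fn3 u v x ξ ζ)).sum) η
      (EuclideanSpace.single i 1) = _
    rw [fderiv_fun_add (d.diffAt_eta u v x ξ η) (diffAt_list_sum_eta u v l x ξ η)]
    rw [ContinuousLinearMap.add_apply]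
    congr 1
    · exact congrFun (congrFun (congrFun (d.pdEta_fn3 u v i) x) ξ) η
    · exact congrFun (congrFun (congrFun ih x) ξ) η

def Good (u v : En n) (N : ℕ) (σ : En n → En n → En n → ℂ) : Prop :=
  ∃ l : List (Amp n), (∀ d ∈ l, d.N = N) ∧
    σ = fun x ξ η => (l.map (fun d => d.fn3 u v x ξ η)).sum

lemma list_map_sum_add (l : List (Amp n)) (f g : Amp n → ℂ) :
    (l.map (fun d => f d + g d)).sum = (l.map f).sum + (l.map g).sum := by
  induction l with
  | nil => simp
  | cons d l ih => simp [ih]; ring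

lemma Good.pdX' {N : ℕ} {σ : En n → En n → En n → ℂ} (h : Good u v N σ) (i : Fin n) :
    Good u v N (pdX i σ) := by
  obtain ⟨l, hl, rfl⟩ := h
  refine ⟨l.map (fun d => d.dx i), ?_, ?_⟩
  · intro e he
    obtain ⟨d, hd, rfl⟩ := List.mem_map.mp he
    exact hl d hd
  · rw [pdX_list_sum]
    funext x ξ η
    simp [List.map_map]
    rfl

lemma Good.pdXi' {N : ℕ} {σ : En n → En n → En n → ℂ} (h : Good u v N σ) (i : Fin n) :
    Good u v (N + 1) (pdXi i σ) := by
  obtain ⟨l, hl, rfl⟩ := h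
  refine ⟨l.map (fun d => d.dxiA i) ++ l.map (fun d => d.dxiB v i), ?_, ?_⟩
  · intro e he
    rcases List.mem_append.mp he with h' | h' <;>
      obtain ⟨d, hd, rfl⟩ := List.mem_map.mp h'
    · show d.N + 1 = N + 1
      rw [hl d hd]
    · show d.N + 1 = N + 1
      rw [hl d hd]
  · rw [pdXi_list_sum]
    funext x ξ η
    rw [list_map_sum_add l (fun d => (d.dxiA i).fn3 u v x ξ η)
      (fun d => (d.dxiB v i).fn3 u v x ξ η)]
    rw [List.map_append, List.sum_append, List.map_map, List.map_map]
    rfl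

lemma Good.pdEta' {N : ℕ} {σ : En n → En n → En n → ℂ} (h : Good u v N σ) (i : Fin n) :
    Good u v (N + 1) (pdEta i σ) := by
  obtain ⟨l, hl, rfl⟩ := h
  refine ⟨l.map (fun d => d.detaA i) ++ l.map (fun d => d.detaB u i), ?_, ?_⟩
  · intro e he
    rcases List.mem_append.mp he with h' | h' <;>
      obtain ⟨d, hd, rfl⟩ := List.mem_map.mp h'
    · show d.N + 1 = N + 1
      rw [hl d hd]
    · show d.N + 1 = N + 1
      rw [hl d hd]
  · rw [pdEta_list_sum]
    funext x ξ η
    rw [list_map_sum_add l (fun d => (d.detaA i).fn3 u v x ξ η)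
      (fun d => (d.detaB u i).fn3 u v x ξ η)]
    rw [List.map_append, List.sum_append, List.map_map, List.map_map]
    rfl

lemma Good.bound {N : ℕ} {σ : En n → En n → En n → ℂ} (h : Good u v N σ) :
    ∃ C : ℝ, 0 ≤ C ∧ ∀ x ξ η : En n,
      ‖σ x ξ η‖ ≤ C * (((1:ℝ) + ‖ξ‖ + ‖η‖) ^ N)⁻¹ := by
  obtain ⟨l, hl, rfl⟩ := h
  induction l with
  | nil => exact ⟨0, le_rfl, by simp⟩
  | cons d l ih =>
    obtain ⟨C2, h20, h2⟩ := ih (fun e he => hl e (List.mem_cons_of_mem d he))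
    obtain ⟨C1, h10, h1⟩ := d.fn_bound u v
    refine ⟨C1 + C2, by positivity, ?_⟩
    intro x ξ η
    simp only [List.map_cons, List.sum_cons]
    calc ‖d.fn3 u v x ξ η + (l.map (fun e => e.fn3 u v x ξ η)).sum‖
        ≤ ‖d.fn3 u v x ξ η‖ + ‖(l.map (fun e => e.fn3 u v x ξ η)).sum‖ := norm_add_le _ _
      _ ≤ C1 * (((1:ℝ) + ‖ξ‖ + ‖η‖) ^ N)⁻¹ + C2 * (((1:ℝ) + ‖ξ‖ + ‖η‖) ^ N)⁻¹ := by
          gcongr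
          · have := h1 (x, ξ, η)
            rw [hl d (List.mem_cons_self)] at this
            exact this
          · exact h2 x ξ η
      _ = (C1 + C2) * (((1:ℝ) + ‖ξ‖ + ‖η‖) ^ N)⁻¹ := by ring

lemma clm_list_sum_apply (L : List (PP n →L[ℝ] ℂ)) (w : PP n) :
    L.sum w = (L.map (fun T => T w)).sum := by
  induction L with
  | nil => simp
  | cons T L ih => simp [ih]

lemma hasFDerivAt_list_sum (l : List (Amp n)) (p : PP n) :
    HasFDerivAt (fun p : PP n => (l.map (fun d => d.fn3 u v p.1 p.2.1 p.2.2)).sum)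
      ((l.map (fun d => d.D u v p)).sum) p := by
  induction l with
  | nil =>
    simp only [List.map_nil, List.sum_nil]
    exact hasFDerivAt_const 0 p
  | cons d l ih =>
    simp only [List.map_cons, List.sum_cons]
    exact (d.hasFDerivAt_fn u v p).add ih

lemma contDiff_list_sum' {α : Type} (k : WithTop ℕ∞) (l : List α) (g : α → PP n → ℂ)
    (h : ∀ a ∈ l, ContDiff ℝ k (g a)) :
    ContDiff ℝ k (fun p => (l.map (fun a => g a p)).sum) := by
  induction l with
  | nil => simp only [List.map_nil, List.sum_nil]; exact contDiff_const
  | cons a l ih =>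
    simp only [List.map_cons, List.sum_cons]
    exact (h a (List.mem_cons_self)).add (ih (fun b hb => h b (List.mem_cons_of_mem a hb)))

lemma list_contDiff (k : ℕ) (l : List (Amp n)) :
    ContDiff ℝ (k : ℕ) (fun p : PP n => (l.map (fun d => d.fn3 u v p.1 p.2.1 p.2.2)).sum) := by
  induction k generalizing l with
  | zero =>
    rw [show ((0 : ℕ) : WithTop ℕ∞) = 0 from rfl, contDiff_zero]
    induction l with
    | nil => simp only [List.map_nil, List.sum_nil]; exact continuous_const
    | cons d l ihl =>
      simp only [List.map_cons, List.sum_cons]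
      have hc : Continuous fun p : PP n => d.fn3 u v p.1 p.2.1 p.2.2 :=
        Differentiable.continuous (fun p => (d.hasFDerivAt_fn u v p).differentiableAt)
      exact hc.add ihl
  | succ k ih =>
    rw [show ((k + 1 : ℕ) : WithTop ℕ∞) = (k : WithTop ℕ∞) + 1 by push_cast; rfl]
    rw [contDiff_succ_iff_fderiv_apply]
    refine ⟨fun p => (hasFDerivAt_list_sum u v l p).differentiableAt, ?_, ?_⟩
    · intro hω
      exact absurd hω (by exact_mod_cast WithTop.natCast_ne_top k)
    · intro y
      have hfd : (fun p : PP n => fderiv ℝ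
            (fun p : PP n => (l.map (fun d => d.fn3 u v p.1 p.2.1 p.2.2)).sum) p y)
          = fun p => (l.map (fun d => (d.D u v p) y)).sum := by
        funext p
        rw [(hasFDerivAt_list_sum u v l p).fderiv]
        rw [clm_list_sum_apply, List.map_map]
        rfl
      rw [hfd]
      apply contDiff_list_sum' (k : WithTop ℕ∞) l (fun d p => (d.D u v p) y)
      intro d _
      have hsingle : ∀ e : Amp n, ContDiff ℝ (k : WithTop ℕ∞) (fun p : PP n => e.fn u v p) := by
        intro e
        have := ih [e]
        simpa [Amp.fn3] using this
      have hDy : (fun p : PP n => (d.D u v p) y) = fun p =>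
          (∑ i, ((d.dx i).fn u v p) * ((y.1 i : ℝ) : ℂ))
          + ((∑ i, (((d.dxiA i).fn u v p) + ((d.dxiB v i).fn u v p)) * ((y.2.1 i : ℝ) : ℂ))
          + (∑ i, (((d.detaA i).fn u v p) + ((d.detaB u i).fn u v p)) * ((y.2.2 i : ℝ) : ℂ))) := by
        funext p
        simp [Amp.D, ContinuousLinearMap.sum_apply, ContinuousLinearMap.smul_apply,
          ContinuousLinearMap.add_apply, smul_eq_mul]
        ring
      rw [hDy]
      apply ContDiff.add
      · apply ContDiff.sum
        intro i _
        exact (hsingle _).mul contDiff_const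
      apply ContDiff.add
      · apply ContDiff.sum
        intro i _
        exact ((hsingle _).add (hsingle _)).mul contDiff_const
      · apply ContDiff.sum
        intro i _
        exact ((hsingle _).add (hsingle _)).mul contDiff_const

lemma Good.foldr_pdX {N : ℕ} {σ : En n → En n → En n → ℂ} (h : Good u v N σ)
    (γ : List (Fin n)) : Good u v N (γ.foldr pdX σ) := by
  induction γ with
  | nil => exact h
  | cons i γ ih => exact ih.pdX' u v i

lemma Good.foldr_pdEta {N : ℕ} {σ : En n → En n → En n → ℂ} (h : Good u v N σ)
    (β : List (Fin n)) : Good u v (N + β.length) (β.foldr pdEta σ) := by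
  induction β with
  | nil => exact h
  | cons i β ih => exact ih.pdEta' u v i

lemma Good.foldr_pdXi {N : ℕ} {σ : En n → En n → En n → ℂ} (h : Good u v N σ)
    (α : List (Fin n)) : Good u v (N + α.length) (α.foldr pdXi σ) := by
  induction α with
  | nil => exact h
  | cons i α ih => exact ih.pdXi' u v i

def mkAmp (ψhat θhat : En n → ℂ) (mfun : ℝ → En n → ℂ)
    (hψ_smooth : ContDiff ℝ (⊤ : ℕ∞) ψhat)
    (hψ_supp : ∀ ξ : En n, ‖ξ‖ < 1 / 2 ∨ 2 < ‖ξ‖ → ψhat ξ = 0)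
    (hθ_smooth : ContDiff ℝ (⊤ : ℕ∞) θhat)
    (hθ_supp : ∀ η : En n, 1 / 4 < ‖η‖ → θhat η = 0)
    (hm_meas : ∀ x : En n, Measurable fun t : ℝ => mfun t x)
    (hm_smooth : ∀ t ∈ Set.Ioc (0 : ℝ) 1, ContDiff ℝ (⊤ : ℕ∞) (mfun t))
    (hm_bound : ∀ γ : List (Fin n), ∃ A : ℝ, ∀ t ∈ Set.Ioc (0 : ℝ) 1, ∀ x : En n,
      ‖(γ.foldr pd1 (mfun t)) x‖ ≤ A) : Amp n where
  N := 0
  c := 1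
  Φ := ψhat
  Θ := θhat
  M := mfun
  hΦ := hψ_smooth
  hΦs := hψ_supp
  hΘ := hθ_smooth
  hΘs := hθ_supp
  hM := fun x => (hm_meas x).aestronglyMeasurable
  hMs := hm_smooth
  hMb := hm_bound

end Para


end ParaAux

/-- **Lemma 4.4 of the paper (paraproducts are bilinear pseudodifferential operators of
order `0`).**  With `ψ̂` supported in the annulus `{1/2 ≤ |ξ| ≤ 2}`, `θ̂` supported in
the ball `{|η| ≤ 1/4}`, and `m(t,x)` smooth in `x` with all `x`-derivatives bounded
uniformly in `t ∈ (0,1]`, the symbol `λ` is smooth and lies in `S^0_{1,0}(n,2)`, with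
seminorms depending polynomially on `|u|` and `|v|`. -/
theorem paraproduct_symbol_S0 (n : ℕ) (hn : 1 ≤ n) (u v : En n)
    (ψhat θhat : En n → ℂ)
    (hψ_smooth : ContDiff ℝ (⊤ : ℕ∞) ψhat) (hψ_cpt : HasCompactSupport ψhat)
    (hψ_supp : ∀ ξ : En n, ‖ξ‖ < 1 / 2 ∨ 2 < ‖ξ‖ → ψhat ξ = 0)
    (hθ_smooth : ContDiff ℝ (⊤ : ℕ∞) θhat) (hθ_cpt : HasCompactSupport θhat)
    (hθ_supp : ∀ η : En n, 1 / 4 < ‖η‖ → θhat η = 0)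
    (mfun : ℝ → En n → ℂ)
    (hm_meas : ∀ x : En n, Measurable fun t : ℝ => mfun t x)
    (hm_smooth : ∀ t ∈ Set.Ioc (0 : ℝ) 1, ContDiff ℝ (⊤ : ℕ∞) (mfun t))
    (hm_bound : ∀ γ : List (Fin n), ∃ A : ℝ, ∀ t ∈ Set.Ioc (0 : ℝ) 1, ∀ x : En n,
      ‖(γ.foldr pd1 (mfun t)) x‖ ≤ A) :
    ContDiff ℝ (⊤ : ℕ∞)
      (fun p : En n × En n × En n => paraSymbol ψhat θhat u v mfun p.1 p.2.1 p.2.2) ∧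
    ∀ α β γ : List (Fin n), ∃ (C : ℝ) (k : ℕ), ∀ x ξ η : En n,
      ‖mderiv α β γ (paraSymbol ψhat θhat u v mfun) x ξ η‖ ≤
        C * (1 + ‖u‖ + ‖v‖) ^ k *
          (1 + ‖ξ‖ + ‖η‖) ^ (-(α.length : ℝ) - (β.length : ℝ)) := by

  have hbase : paraSymbol ψhat θhat u v mfun =
      (Para.mkAmp ψhat θhat mfun hψ_smooth hψ_supp hθ_smooth hθ_supp hm_meas hm_smooth
        hm_bound).fn3 u v := by
    funext x ξ η
    rw [paraSymbol, Para.Amp.fn3, Para.Amp.fn, Para.μ01]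
    congr 1
    funext t
    rw [Para.Amp.F, Para.mkAmp]
    rw [real_inner_comm ξ v, real_inner_comm η u]
    push_cast
    ring
  have hGood : Para.Good u v 0 (paraSymbol ψhat θhat u v mfun) := by
    refine ⟨[Para.mkAmp ψhat θhat mfun hψ_smooth hψ_supp hθ_smooth hθ_supp hm_meas hm_smooth
      hm_bound], ?_, ?_⟩
    · intro d hd
      rw [List.mem_singleton] at hd
      subst hd
      rfl
    · rw [hbase]
      funext x ξ η
      simp
  constructor
  · obtain ⟨l, hl, hσ⟩ := hGood
    rw [hσ]
    exact contDiff_infty.mpr fun k => Para.list_contDiff u v k l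
  · intro α β γ
    have h3 := ((hGood.foldr_pdX u v γ).foldr_pdEta u v β).foldr_pdXi u v α
    obtain ⟨C, hC0, hC⟩ := h3.bound u v
    refine ⟨C, 0, ?_⟩
    intro x ξ η
    have hb := hC x ξ η
    have hpos : (0:ℝ) < 1 + ‖ξ‖ + ‖η‖ := by positivity
    have hrw : ((1:ℝ) + ‖ξ‖ + ‖η‖) ^ (-(α.length : ℝ) - (β.length : ℝ))
        = (((1:ℝ) + ‖ξ‖ + ‖η‖) ^ (0 + β.length + α.length : ℕ))⁻¹ := by
      rw [show (-(α.length : ℝ) - (β.length : ℝ)) = -((0 + β.length + α.length : ℕ) : ℝ) by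
        push_cast; ring]
      rw [Real.rpow_neg (le_of_lt hpos), Real.rpow_natCast]
    rw [pow_zero, mul_one, hrw]
    exact hb


end
end

section
/- Let n ≥ 1, m₂ < 0, 0 < κ ≤ 1, and let Ψ : ℝ^n → ℂ be a Schwartz function with ∫_{ℝ^n} Ψ(z) dz = 0. For t ∈ (0,1) define K_t(z) = ∫_κ^{1/t} s^{m₂} (ts)^{−n} Ψ(z/(ts)) ds/s. Then: (i) ∫_{ℝ^n} K_t(z) dz = 0 for every t ∈ (0,1); (ii) for each 0 < δ < −m₂ there is a constant C (depending on n, δ, m₂, κ and Ψ) such that |K_t(z)| ≤ C t^{−n} (1 + |z|/t)^{−n−δ} for all z ∈ ℝ^n and t ∈ (0,1); (iii) there is a constant C with |K_t(z) − K_t(z′)| ≤ C t^{−n−1} |z − z′| for all z, z′ ∈ ℝ^n and t ∈ (0,1). -/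
open MeasureTheory SchwartzMap
open scoped ENNReal NNReal

noncomputable section

/-- The kernel `K_t(z) = ∫_κ^{1/t} s^{m₂} (ts)^{-n} Ψ(z/(ts)) ds/s`. -/
def Kker (n : ℕ) (m₂ κ : ℝ) (Ψ : En n → ℂ) (t : ℝ) (z : En n) : ℂ :=
  ∫ s in Set.Ioc κ (1 / t), (s ^ m₂ * ((t * s) ^ n)⁻¹ / s : ℝ) • Ψ ((t * s)⁻¹ • z)

namespace KkerAux

/-- Polynomial decay bound for a Schwartz function, real exponent version. -/
lemma schwartz_decay (n : ℕ) (Ψ : 𝓢(En n, ℂ)) (r : ℝ) (hr : 0 ≤ r) :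
    ∃ C : ℝ, 0 ≤ C ∧ ∀ x : En n, ‖Ψ x‖ ≤ C * (1 + ‖x‖) ^ (-r) := by
  set k := ⌈r⌉₊ with hk
  set C : ℝ := 2 ^ k * ((Finset.Iic (k, 0)).sup (fun m => SchwartzMap.seminorm ℝ m.1 m.2)) Ψ
    with hC
  have hC0 : 0 ≤ C := by
    apply mul_nonneg (by positivity)
    exact apply_nonneg _ _
  refine ⟨C, hC0, fun x => ?_⟩
  have h := SchwartzMap.one_add_le_sup_seminorm_apply (𝕜 := ℝ) (m := (k, 0)) le_rfl le_rfl Ψ x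
  rw [norm_iteratedFDeriv_zero] at h
  have hx1 : (1 : ℝ) ≤ 1 + ‖x‖ := le_add_of_nonneg_right (norm_nonneg _)
  have hx0 : (0 : ℝ) < 1 + ‖x‖ := lt_of_lt_of_le one_pos hx1
  have hpow : (1 + ‖x‖) ^ (-(k : ℝ)) ≤ (1 + ‖x‖) ^ (-r) := by
    apply Real.rpow_le_rpow_of_exponent_le hx1
    simp only [neg_le_neg_iff]
    exact Nat.le_ceil r
  have hne : (1 + ‖x‖) ^ k ≠ 0 := by positivity
  have h1 : ‖Ψ x‖ ≤ C * (1 + ‖x‖) ^ (-(k : ℝ)) := by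
    rw [Real.rpow_neg hx0.le, Real.rpow_natCast]
    have := mul_le_mul_of_nonneg_right h (by positivity : (0:ℝ) ≤ ((1 + ‖x‖) ^ k)⁻¹)
    calc ‖Ψ x‖ = (1 + ‖x‖) ^ k * ‖Ψ x‖ * ((1 + ‖x‖) ^ k)⁻¹ := by field_simp
    _ ≤ C * ((1 + ‖x‖) ^ k)⁻¹ := this
  exact h1.trans (mul_le_mul_of_nonneg_left hpow hC0)

/-- A Schwartz function is globally Lipschitz with constant `seminorm ℝ 0 1`. -/
lemma schwartz_lip (n : ℕ) (Ψ : 𝓢(En n, ℂ)) (x y : En n) :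
    ‖Ψ x - Ψ y‖ ≤ (SchwartzMap.seminorm ℝ 0 1) Ψ * ‖x - y‖ := by
  have hb : ∀ w : En n, ‖fderiv ℝ (⇑Ψ) w‖ ≤ (SchwartzMap.seminorm ℝ 0 1) Ψ := by
    intro w
    have h1 := Ψ.norm_iteratedFDeriv_le_seminorm ℝ 1 w
    have h2 : ‖fderiv ℝ (⇑Ψ) w‖ = ‖iteratedFDeriv ℝ 1 (⇑Ψ) w‖ := by
      rw [← norm_iteratedFDeriv_fderiv, norm_iteratedFDeriv_zero]
    rw [h2]; exact h1
  exact Convex.norm_image_sub_le_of_norm_fderiv_le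
    (fun w _ => (Ψ.differentiable).differentiableAt)
    (fun w _ => hb w) convex_univ (Set.mem_univ y) (Set.mem_univ x)

lemma Kc_contOn (n : ℕ) {m₂ t : ℝ} (ht : 0 < t) {S : Set ℝ} (hS : ∀ s ∈ S, 0 < s) :
    ContinuousOn (fun s : ℝ => s ^ m₂ * ((t * s) ^ n)⁻¹ / s) S := by
  apply ContinuousOn.div
  · apply ContinuousOn.mul
    · exact continuousOn_id.rpow_const fun s hs => Or.inl (hS s hs).ne'
    · exact ((continuous_const.mul continuous_id).pow n).continuousOn.inv₀
        fun s hs => pow_ne_zero _ (mul_pos ht (hS s hs)).ne'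
  · exact continuousOn_id
  · exact fun s hs => (hS s hs).ne'

lemma Kmap_contOn (n : ℕ) {m₂ t : ℝ} (ht : 0 < t) {S : Set ℝ} (hS : ∀ s ∈ S, 0 < s)
    (Ψ : 𝓢(En n, ℂ)) (z : En n) :
    ContinuousOn (fun s : ℝ => (s ^ m₂ * ((t * s) ^ n)⁻¹ / s : ℝ) • Ψ ((t * s)⁻¹ • z)) S := by
  apply ContinuousOn.smul (Kc_contOn n ht hS)
  apply Ψ.continuous.comp_continuousOn
  exact ContinuousOn.smul
    ((continuous_const.mul continuous_id).continuousOn.inv₀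
      fun s hs => (mul_pos ht (hS s hs)).ne') continuousOn_const

lemma Kmap_integrableOn (n : ℕ) {m₂ κ t : ℝ} (hκ : 0 < κ) (ht : 0 < t)
    (Ψ : 𝓢(En n, ℂ)) (z : En n) :
    IntegrableOn (fun s : ℝ => (s ^ m₂ * ((t * s) ^ n)⁻¹ / s : ℝ) • Ψ ((t * s)⁻¹ • z))
      (Set.Ioc κ (1 / t)) := by
  have h := (Kmap_contOn (m₂ := m₂) n ht (S := Set.Icc κ (1/t))
    (fun s hs => lt_of_lt_of_le hκ hs.1) Ψ z).integrableOn_Icc (μ := volume)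
  exact h.mono_set Set.Ioc_subset_Icc_self

lemma rpow_integrableOn_Ioc {a κ x : ℝ} (ha : a < -1) (hκ : 0 < κ) :
    IntegrableOn (fun s : ℝ => s ^ a) (Set.Ioc κ x) :=
  (integrableOn_Ioi_rpow_of_lt ha hκ).mono_set Set.Ioc_subset_Ioi_self

lemma rpow_setIntegral_le {a κ x : ℝ} (ha : a < -1) (hκ : 0 < κ) :
    (∫ s in Set.Ioc κ x, s ^ a) ≤ ∫ s in Set.Ioi κ, s ^ a := by
  apply setIntegral_mono_set (integrableOn_Ioi_rpow_of_lt ha hκ)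
  · filter_upwards [ae_restrict_mem measurableSet_Ioi] with s hs
    exact Real.rpow_nonneg (le_of_lt (hκ.trans hs)) _
  · exact (Set.Ioc_subset_Ioi_self).eventuallyLE

lemma coef_eq (n : ℕ) {m₂ δ κ t s : ℝ} (hκ : 0 < κ) (ht : 0 < t) (hs : 0 < s) :
    (s ^ m₂ * ((t * s) ^ n)⁻¹ / s) * (s / κ) ^ ((n : ℝ) + δ) =
      κ ^ (-((n : ℝ) + δ)) * t ^ (-(n : ℝ)) * s ^ (m₂ + δ - 1) := by
  have hts : (0 : ℝ) < t * s := mul_pos ht hs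
  have e1 : ((t * s : ℝ) ^ n)⁻¹ = t ^ (-(n : ℝ)) * s ^ (-(n : ℝ)) := by
    rw [← Real.rpow_natCast (t * s) n, ← Real.rpow_neg hts.le,
      Real.mul_rpow ht.le hs.le]
  have e2 : (s / κ) ^ ((n : ℝ) + δ) = s ^ ((n : ℝ) + δ) * κ ^ (-((n : ℝ) + δ)) := by
    rw [Real.div_rpow hs.le hκ.le, Real.rpow_neg hκ.le, div_eq_mul_inv]
  have e3 : s ^ (m₂ + δ - 1) = s ^ m₂ * s ^ (-(n : ℝ)) * s⁻¹ * s ^ ((n : ℝ) + δ) := by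
    rw [← Real.rpow_neg_one s, ← Real.rpow_add hs, ← Real.rpow_add hs, ← Real.rpow_add hs]
    congr 1; ring
  rw [e1, e2, e3]; ring

lemma coef_eq' (n : ℕ) {m₂ t s : ℝ} (ht : 0 < t) (hs : 0 < s) :
    (s ^ m₂ * ((t * s) ^ n)⁻¹ / s) * (t * s)⁻¹ =
      t ^ (-(n : ℝ) - 1) * s ^ (m₂ - (n : ℝ) - 2) := by
  have hts : (0 : ℝ) < t * s := mul_pos ht hs
  have e1 : ((t * s : ℝ) ^ n)⁻¹ = t ^ (-(n : ℝ)) * s ^ (-(n : ℝ)) := by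
    rw [← Real.rpow_natCast (t * s) n, ← Real.rpow_neg hts.le,
      Real.mul_rpow ht.le hs.le]
  have e2 : t ^ (-(n : ℝ) - 1) = t ^ (-(n : ℝ)) * t⁻¹ := by
    rw [← Real.rpow_neg_one t, ← Real.rpow_add ht, sub_eq_add_neg]
  have e3 : s ^ (m₂ - (n : ℝ) - 2) = s ^ m₂ * s ^ (-(n : ℝ)) * s⁻¹ * s⁻¹ := by
    rw [← Real.rpow_neg_one s, ← Real.rpow_add hs, ← Real.rpow_add hs, ← Real.rpow_add hs]
    congr 1; ring
  rw [e1, e2, e3, mul_inv]; ring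

lemma oneadd_bound {κ t s a β : ℝ} (hκ : 0 < κ) (hκ1 : κ ≤ 1) (ht : 0 < t)
    (hs : κ < s) (ha : 0 ≤ a) (hβ : 0 ≤ β) :
    (1 + a / t) ^ β ≤ (s / κ) ^ β * (1 + (t * s)⁻¹ * a) ^ β := by
  have hs0 : 0 < s := hκ.trans hs
  have hA : (0:ℝ) < 1 + (t * s)⁻¹ * a := by positivity
  rw [← Real.mul_rpow (by positivity) hA.le]
  apply Real.rpow_le_rpow (by positivity) ?_ hβ
  have key : s / κ * (1 + (t * s)⁻¹ * a) = s / κ + a / (t * κ) := by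
    field_simp
  rw [key]
  have h1 : (1 : ℝ) ≤ s / κ := (one_le_div hκ).2 hs.le
  have h2 : a / t ≤ a / (t * κ) :=
    div_le_div_of_nonneg_left ha (mul_pos ht hκ) (mul_le_of_le_one_right ht.le hκ1)
  linarith

lemma inv_rpow_bound {κ t s a β : ℝ} (hκ : 0 < κ) (hκ1 : κ ≤ 1) (ht : 0 < t)
    (hs : κ < s) (ha : 0 ≤ a) (hβ : 0 ≤ β) :
    (1 + (t * s)⁻¹ * a) ^ (-β) ≤ (s / κ) ^ β * (1 + a / t) ^ (-β) := by
  have hs0 : 0 < s := hκ.trans hs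
  have hA : (0:ℝ) < 1 + (t * s)⁻¹ * a := by positivity
  have hB : (0:ℝ) < 1 + a / t := by positivity
  have hApow : (0:ℝ) < (1 + (t * s)⁻¹ * a) ^ β := Real.rpow_pos_of_pos hA β
  have hBpow : (0:ℝ) < (1 + a / t) ^ β := Real.rpow_pos_of_pos hB β
  have hbound := oneadd_bound hκ hκ1 ht hs ha hβ
  rw [Real.rpow_neg hA.le, Real.rpow_neg hB.le]
  have h5 : ((1 + (t * s)⁻¹ * a) ^ β)⁻¹ ≤ (s / κ) ^ β / (1 + a / t) ^ β := by
    rw [le_div_iff₀ hBpow]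
    calc ((1 + (t * s)⁻¹ * a) ^ β)⁻¹ * (1 + a / t) ^ β
        ≤ ((1 + (t * s)⁻¹ * a) ^ β)⁻¹ * ((s / κ) ^ β * (1 + (t * s)⁻¹ * a) ^ β) :=
          mul_le_mul_of_nonneg_left hbound (inv_nonneg.2 hApow.le)
      _ = (s / κ) ^ β := by field_simp
  calc ((1 + (t * s)⁻¹ * a) ^ β)⁻¹ ≤ (s / κ) ^ β / (1 + a / t) ^ β := h5
    _ = (s / κ) ^ β * ((1 + a / t) ^ β)⁻¹ := by rw [div_eq_mul_inv]

end KkerAux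

open KkerAux

/-- **Lemma 4.5 of the paper.** For `m₂ < 0`, `0 < κ ≤ 1` and a Schwartz function `Ψ`
with vanishing integral, the kernel `K_t` satisfies: (i) `∫ K_t = 0`; (ii) the decay
estimate `|K_t(z)| ≤ C t^{-n} (1 + |z|/t)^{-n-δ}` for each `0 < δ < -m₂`; and (iii)
the Lipschitz estimate `|K_t(z) - K_t(z')| ≤ C t^{-n-1} |z - z'|`, all uniformly in
`t ∈ (0,1)`. -/
theorem Kker_cancellation_decay_lipschitz (n : ℕ) (hn : 1 ≤ n)
    (m₂ : ℝ) (hm₂ : m₂ < 0) (κ : ℝ) (hκ : 0 < κ) (hκ1 : κ ≤ 1)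
    (Ψ : 𝓢(En n, ℂ)) (hΨ : (∫ z : En n, Ψ z) = 0) :
    (∀ t ∈ Set.Ioo (0 : ℝ) 1, (∫ z : En n, Kker n m₂ κ (⇑Ψ) t z) = 0) ∧
    (∀ δ : ℝ, 0 < δ → δ < -m₂ → ∃ C : ℝ, ∀ t ∈ Set.Ioo (0 : ℝ) 1, ∀ z : En n,
      ‖Kker n m₂ κ (⇑Ψ) t z‖ ≤
        C * t ^ (-(n : ℝ)) * (1 + ‖z‖ / t) ^ (-(n : ℝ) - δ)) ∧
    (∃ C : ℝ, ∀ t ∈ Set.Ioo (0 : ℝ) 1, ∀ z z' : En n,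
      ‖Kker n m₂ κ (⇑Ψ) t z - Kker n m₂ κ (⇑Ψ) t z'‖ ≤
        C * t ^ (-(n : ℝ) - 1) * ‖z - z'‖) := by
  refine ⟨?_, ?_, ?_⟩
  · -- (i) cancellation
    rintro t ⟨ht0, ht1⟩
    have hc_meas : Measurable fun s : ℝ => s ^ m₂ * ((t * s) ^ n)⁻¹ / s :=
      ((measurable_id.pow_const m₂).mul
        (((measurable_const.mul measurable_id).pow_const n).inv)).div measurable_id
    have hFmeas : Measurable fun p : En n × ℝ =>
        (p.2 ^ m₂ * ((t * p.2) ^ n)⁻¹ / p.2 : ℝ) • Ψ ((t * p.2)⁻¹ • p.1) := by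
      have m1 : Measurable fun p : En n × ℝ => (t * p.2)⁻¹ • p.1 :=
        continuous_smul.measurable.comp
          (((measurable_const.mul measurable_snd).inv).prodMk measurable_fst)
      exact continuous_smul.measurable.comp
        ((hc_meas.comp measurable_snd).prodMk (Ψ.continuous.measurable.comp m1))
    set ν := volume.restrict (Set.Ioc κ (1/t)) with hν
    have hInt : Integrable
        (Function.uncurry fun (z : En n) (s : ℝ) =>
          (s ^ m₂ * ((t * s) ^ n)⁻¹ / s : ℝ) • Ψ ((t * s)⁻¹ • z)) (volume.prod ν) := by
      have hESM : AEStronglyMeasurable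
          (Function.uncurry fun (z : En n) (s : ℝ) =>
            (s ^ m₂ * ((t * s) ^ n)⁻¹ / s : ℝ) • Ψ ((t * s)⁻¹ • z)) (volume.prod ν) :=
        hFmeas.aestronglyMeasurable
      rw [integrable_prod_iff' hESM]
      constructor
      · filter_upwards [ae_restrict_mem measurableSet_Ioc] with s hs
        have hs0 : 0 < s := hκ.trans hs.1
        have hts : t * s ≠ 0 := (mul_pos ht0 hs0).ne'
        exact ((integrable_comp_smul_iff volume (⇑Ψ) (inv_ne_zero hts)).2 Ψ.integrable).smul
          (s ^ m₂ * ((t * s) ^ n)⁻¹ / s : ℝ)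
      · have key : ∀ s ∈ Set.Ioc κ (1/t),
            (∫ z : En n, ‖(s ^ m₂ * ((t * s) ^ n)⁻¹ / s : ℝ) • Ψ ((t * s)⁻¹ • z)‖) =
              |s ^ m₂ * ((t * s) ^ n)⁻¹ / s| * ((t * s) ^ n * ∫ z : En n, ‖Ψ z‖) := by
          intro s hs
          have hs0 : 0 < s := hκ.trans hs.1
          have hts : 0 < t * s := mul_pos ht0 hs0
          have e1 : (∫ z : En n, ‖(s ^ m₂ * ((t * s) ^ n)⁻¹ / s : ℝ) • Ψ ((t * s)⁻¹ • z)‖)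
              = ∫ z : En n, |s ^ m₂ * ((t * s) ^ n)⁻¹ / s| * ‖Ψ ((t * s)⁻¹ • z)‖ := by
            congr 1; funext z; rw [norm_smul, Real.norm_eq_abs]
          rw [e1, integral_const_mul]
          congr 1
          have e2 := MeasureTheory.Measure.integral_comp_smul (μ := volume)
            (fun w : En n => ‖Ψ w‖) ((t * s)⁻¹)
          simp only [finrank_euclideanSpace_fin] at e2
          rw [e2, inv_pow, inv_inv, abs_of_pos (pow_pos hts n), smul_eq_mul]
        have hφ : IntegrableOn (fun s : ℝ =>
            |s ^ m₂ * ((t * s) ^ n)⁻¹ / s| * ((t * s) ^ n * ∫ z : En n, ‖Ψ z‖))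
            (Set.Ioc κ (1/t)) := by
          have hcont : ContinuousOn (fun s : ℝ =>
              |s ^ m₂ * ((t * s) ^ n)⁻¹ / s| * ((t * s) ^ n * ∫ z : En n, ‖Ψ z‖))
              (Set.Icc κ (1/t)) := by
            apply ContinuousOn.mul
            · exact (Kc_contOn n ht0 (fun s hs => lt_of_lt_of_le hκ hs.1)).abs
            · exact (((continuous_const.mul continuous_id).pow n).continuousOn).mul
                continuousOn_const
          exact (hcont.integrableOn_Icc (μ := volume)).mono_set Set.Ioc_subset_Icc_self
        apply hφ.congr
        filter_upwards [ae_restrict_mem measurableSet_Ioc] with s hs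
        exact (key s hs).symm
    have hswap := integral_integral_swap hInt
    have hzero : Set.EqOn (fun s : ℝ => ∫ z : En n,
        (s ^ m₂ * ((t * s) ^ n)⁻¹ / s : ℝ) • Ψ ((t * s)⁻¹ • z)) (fun _ => (0 : ℂ))
        (Set.Ioc κ (1/t)) := by
      intro s hs
      have hs0 : 0 < s := hκ.trans hs.1
      have hts : 0 < t * s := mul_pos ht0 hs0
      simp only
      rw [integral_smul]
      have e2 := MeasureTheory.Measure.integral_comp_smul (μ := volume) (⇑Ψ) ((t * s)⁻¹)
      simp only [finrank_euclideanSpace_fin] at e2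
      rw [e2, hΨ, smul_zero, smul_zero]
    calc (∫ z : En n, Kker n m₂ κ (⇑Ψ) t z)
        = ∫ s in Set.Ioc κ (1/t), ∫ z : En n,
            (s ^ m₂ * ((t * s) ^ n)⁻¹ / s : ℝ) • Ψ ((t * s)⁻¹ • z) := by
          simp only [Kker]; exact hswap
      _ = 0 := by
          rw [setIntegral_congr_fun measurableSet_Ioc hzero]
          simp
  · -- (ii) decay
    intro δ hδ0 hδm
    set β : ℝ := (n : ℝ) + δ with hβ
    have hβ0 : 0 ≤ β := by positivity
    obtain ⟨C₀, hC₀0, hC₀⟩ := schwartz_decay n Ψ β hβ0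
    have hexp : m₂ + δ - 1 < -1 := by linarith
    set I : ℝ := ∫ s in Set.Ioi κ, s ^ (m₂ + δ - 1) with hI
    have hI0 : 0 ≤ I := setIntegral_nonneg measurableSet_Ioi
      fun s hs => Real.rpow_nonneg (le_of_lt (hκ.trans hs)) _
    refine ⟨C₀ * κ ^ (-β) * I, ?_⟩
    rintro t ⟨ht0, ht1⟩ z
    have hB : (0:ℝ) < 1 + ‖z‖ / t := by positivity
    have hcoef0 : 0 ≤ C₀ * κ ^ (-β) * t ^ (-(n:ℝ)) * (1 + ‖z‖ / t) ^ (-β) :=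
      mul_nonneg (mul_nonneg (mul_nonneg hC₀0 (Real.rpow_nonneg hκ.le _))
        (Real.rpow_nonneg ht0.le _)) (Real.rpow_nonneg hB.le _)
    have hpt : ∀ s ∈ Set.Ioc κ (1/t),
        ‖(s ^ m₂ * ((t * s) ^ n)⁻¹ / s : ℝ) • Ψ ((t * s)⁻¹ • z)‖ ≤
          (C₀ * κ ^ (-β) * t ^ (-(n:ℝ)) * (1 + ‖z‖ / t) ^ (-β)) * s ^ (m₂ + δ - 1) := by
      intro s hs
      have hs0 : 0 < s := hκ.trans hs.1
      have hts : 0 < t * s := mul_pos ht0 hs0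
      have hc : 0 < s ^ m₂ * ((t * s) ^ n)⁻¹ / s := by positivity
      have hw : ‖(t * s)⁻¹ • z‖ = (t * s)⁻¹ * ‖z‖ := by
        rw [norm_smul, Real.norm_eq_abs, abs_of_pos (inv_pos.2 hts)]
      have h1 : ‖Ψ ((t * s)⁻¹ • z)‖ ≤ C₀ * ((s / κ) ^ β * (1 + ‖z‖ / t) ^ (-β)) := by
        calc ‖Ψ ((t * s)⁻¹ • z)‖ ≤ C₀ * (1 + ‖(t * s)⁻¹ • z‖) ^ (-β) := hC₀ _
        _ ≤ C₀ * ((s / κ) ^ β * (1 + ‖z‖ / t) ^ (-β)) := by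
            apply mul_le_mul_of_nonneg_left _ hC₀0
            rw [hw]
            exact inv_rpow_bound hκ hκ1 ht0 hs.1 (norm_nonneg z) hβ0
      rw [norm_smul, Real.norm_eq_abs, abs_of_pos hc]
      calc (s ^ m₂ * ((t * s) ^ n)⁻¹ / s) * ‖Ψ ((t * s)⁻¹ • z)‖
          ≤ (s ^ m₂ * ((t * s) ^ n)⁻¹ / s) * (C₀ * ((s / κ) ^ β * (1 + ‖z‖ / t) ^ (-β))) :=
            mul_le_mul_of_nonneg_left h1 hc.le
        _ = (C₀ * (1 + ‖z‖ / t) ^ (-β)) * ((s ^ m₂ * ((t * s) ^ n)⁻¹ / s) * (s / κ) ^ β) := by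
            ring
        _ = (C₀ * κ ^ (-β) * t ^ (-(n:ℝ)) * (1 + ‖z‖ / t) ^ (-β)) * s ^ (m₂ + δ - 1) := by
            rw [hβ, coef_eq n hκ ht0 hs0]; ring
    have hint1 : IntegrableOn
        (fun s : ℝ => ‖(s ^ m₂ * ((t * s) ^ n)⁻¹ / s : ℝ) • Ψ ((t * s)⁻¹ • z)‖)
        (Set.Ioc κ (1/t)) := (Kmap_integrableOn n hκ ht0 Ψ z).norm
    have hint2 : IntegrableOn
        (fun s : ℝ => (C₀ * κ ^ (-β) * t ^ (-(n:ℝ)) * (1 + ‖z‖ / t) ^ (-β)) * s ^ (m₂ + δ - 1))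
        (Set.Ioc κ (1/t)) := (rpow_integrableOn_Ioc hexp hκ).const_mul _
    have h0 : ‖Kker n m₂ κ (⇑Ψ) t z‖ ≤
        ∫ s in Set.Ioc κ (1/t), ‖(s ^ m₂ * ((t * s) ^ n)⁻¹ / s : ℝ) • Ψ ((t * s)⁻¹ • z)‖ := by
      rw [Kker]; exact norm_integral_le_integral_norm _
    calc ‖Kker n m₂ κ (⇑Ψ) t z‖
        ≤ ∫ s in Set.Ioc κ (1/t), ‖(s ^ m₂ * ((t * s) ^ n)⁻¹ / s : ℝ) • Ψ ((t * s)⁻¹ • z)‖ := h0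
      _ ≤ ∫ s in Set.Ioc κ (1/t),
            (C₀ * κ ^ (-β) * t ^ (-(n:ℝ)) * (1 + ‖z‖ / t) ^ (-β)) * s ^ (m₂ + δ - 1) :=
          setIntegral_mono_on hint1 hint2 measurableSet_Ioc hpt
      _ = (C₀ * κ ^ (-β) * t ^ (-(n:ℝ)) * (1 + ‖z‖ / t) ^ (-β)) *
            ∫ s in Set.Ioc κ (1/t), s ^ (m₂ + δ - 1) := integral_const_mul _ _
      _ ≤ (C₀ * κ ^ (-β) * t ^ (-(n:ℝ)) * (1 + ‖z‖ / t) ^ (-β)) * I :=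
          mul_le_mul_of_nonneg_left (rpow_setIntegral_le hexp hκ) hcoef0
      _ = C₀ * κ ^ (-β) * I * t ^ (-(n:ℝ)) * (1 + ‖z‖ / t) ^ (-(n:ℝ) - δ) := by
          rw [show -(n:ℝ) - δ = -β by rw [hβ]; ring]; ring
  · -- (iii) Lipschitz
    set L := (SchwartzMap.seminorm ℝ 0 1) Ψ with hL
    have hL0 : 0 ≤ L := apply_nonneg _ _
    have hexp : m₂ - (n:ℝ) - 2 < -1 := by
      have hn0 : (0:ℝ) ≤ (n:ℝ) := Nat.cast_nonneg n
      linarith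
    set J : ℝ := ∫ s in Set.Ioi κ, s ^ (m₂ - (n:ℝ) - 2) with hJ
    have hJ0 : 0 ≤ J := setIntegral_nonneg measurableSet_Ioi
      fun s hs => Real.rpow_nonneg (le_of_lt (hκ.trans hs)) _
    refine ⟨L * J, ?_⟩
    rintro t ⟨ht0, ht1⟩ z z'
    have hcoef0 : 0 ≤ L * t ^ (-(n:ℝ) - 1) * ‖z - z'‖ :=
      mul_nonneg (mul_nonneg hL0 (Real.rpow_nonneg ht0.le _)) (norm_nonneg _)
    have hdiff : Kker n m₂ κ (⇑Ψ) t z - Kker n m₂ κ (⇑Ψ) t z' =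
        ∫ s in Set.Ioc κ (1/t),
          ((s ^ m₂ * ((t * s) ^ n)⁻¹ / s : ℝ) •
              (Ψ ((t * s)⁻¹ • z) - Ψ ((t * s)⁻¹ • z'))) := by
      rw [Kker, Kker,
        ← integral_sub (Kmap_integrableOn n hκ ht0 Ψ z) (Kmap_integrableOn n hκ ht0 Ψ z')]
      congr 1
      funext s
      rw [smul_sub]
    have hpt : ∀ s ∈ Set.Ioc κ (1/t),
        ‖(s ^ m₂ * ((t * s) ^ n)⁻¹ / s : ℝ) • (Ψ ((t * s)⁻¹ • z) - Ψ ((t * s)⁻¹ • z'))‖ ≤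
          (L * t ^ (-(n:ℝ) - 1) * ‖z - z'‖) * s ^ (m₂ - (n:ℝ) - 2) := by
      intro s hs
      have hs0 : 0 < s := hκ.trans hs.1
      have hts : 0 < t * s := mul_pos ht0 hs0
      have hc : 0 < s ^ m₂ * ((t * s) ^ n)⁻¹ / s := by positivity
      have h1 : ‖Ψ ((t * s)⁻¹ • z) - Ψ ((t * s)⁻¹ • z')‖ ≤ L * ((t * s)⁻¹ * ‖z - z'‖) := by
        have h2 := schwartz_lip n Ψ ((t * s)⁻¹ • z) ((t * s)⁻¹ • z')
        rw [← smul_sub, norm_smul, Real.norm_eq_abs, abs_of_pos (inv_pos.2 hts)] at h2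
        rw [← mul_assoc] at h2 ⊢
        exact h2
      rw [norm_smul, Real.norm_eq_abs, abs_of_pos hc]
      calc (s ^ m₂ * ((t * s) ^ n)⁻¹ / s) * ‖Ψ ((t * s)⁻¹ • z) - Ψ ((t * s)⁻¹ • z')‖
          ≤ (s ^ m₂ * ((t * s) ^ n)⁻¹ / s) * (L * ((t * s)⁻¹ * ‖z - z'‖)) :=
            mul_le_mul_of_nonneg_left h1 hc.le
        _ = (L * ‖z - z'‖) * ((s ^ m₂ * ((t * s) ^ n)⁻¹ / s) * (t * s)⁻¹) := by ring
        _ = (L * t ^ (-(n:ℝ) - 1) * ‖z - z'‖) * s ^ (m₂ - (n:ℝ) - 2) := by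
            rw [coef_eq' n ht0 hs0]; ring
    have hint1 : IntegrableOn
        (fun s : ℝ => ‖(s ^ m₂ * ((t * s) ^ n)⁻¹ / s : ℝ) •
          (Ψ ((t * s)⁻¹ • z) - Ψ ((t * s)⁻¹ • z'))‖) (Set.Ioc κ (1/t)) := by
      have := ((Kmap_integrableOn (m₂ := m₂) n hκ ht0 Ψ z).sub (Kmap_integrableOn (m₂ := m₂) n hκ ht0 Ψ z')).norm
      apply this.congr
      filter_upwards with s
      simp [smul_sub]
    have hint2 : IntegrableOn
        (fun s : ℝ => (L * t ^ (-(n:ℝ) - 1) * ‖z - z'‖) * s ^ (m₂ - (n:ℝ) - 2))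
        (Set.Ioc κ (1/t)) := (rpow_integrableOn_Ioc hexp hκ).const_mul _
    calc ‖Kker n m₂ κ (⇑Ψ) t z - Kker n m₂ κ (⇑Ψ) t z'‖
        ≤ ∫ s in Set.Ioc κ (1/t),
            ‖(s ^ m₂ * ((t * s) ^ n)⁻¹ / s : ℝ) •
              (Ψ ((t * s)⁻¹ • z) - Ψ ((t * s)⁻¹ • z'))‖ := by
          rw [hdiff]; exact norm_integral_le_integral_norm _
      _ ≤ ∫ s in Set.Ioc κ (1/t),
            (L * t ^ (-(n:ℝ) - 1) * ‖z - z'‖) * s ^ (m₂ - (n:ℝ) - 2) :=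
          setIntegral_mono_on hint1 hint2 measurableSet_Ioc hpt
      _ = (L * t ^ (-(n:ℝ) - 1) * ‖z - z'‖) *
            ∫ s in Set.Ioc κ (1/t), s ^ (m₂ - (n:ℝ) - 2) := integral_const_mul _ _
      _ ≤ (L * t ^ (-(n:ℝ) - 1) * ‖z - z'‖) * J :=
          mul_le_mul_of_nonneg_left (rpow_setIntegral_le hexp hκ) hcoef0
      _ = L * J * t ^ (-(n:ℝ) - 1) * ‖z - z'‖ := by ring

end
end

section
/- Let n ≥ 1, δ > 0 and A > 0. Let μ be a Carleson measure on ℝ^n × (0,∞) and let K : (0,∞) × ℝ^n → ℂ be measurable with |K_t(z)| ≤ A t^{−n}(1 + |z|/t)^{−n−δ} for all t > 0 and z ∈ ℝ^n. Then there is a constant C depending only on n and δ such that for every ε > 0 and every y ∈ ℝ^n, ∫_{ℝ^n × (0,ε)} ( ∫_{|x−y|<ε} |K_t(x−z)| dx ) dμ(z,t) ≤ C A ε^n ‖μ‖_C. In other words, the measure μ̃ on ℝ^n × (0,∞) defined by μ̃(E) = ∫_{ℝ^n×(0,∞)} ( ∫_{ℝ^n} 1_E(x,t) |K_t(x−z)|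 dx ) dμ(z,t) is a Carleson measure with ‖μ̃‖_C ≲ A ‖μ‖_C. -/
set_option maxHeartbeats 1000000

open MeasureTheory
open scoped ENNReal NNReal

noncomputable section

/-- The Carleson norm of a (Borel) measure on `ℝ^n × (0,∞)` (modelled as a measure on
`ℝ^n × ℝ`): `‖μ‖_C = sup_{ε>0, y} ε^{-n} μ({(x,t) : |x-y| < ε, 0 < t < ε})`. -/
def carlesonNorm {n : ℕ} (μ : Measure (En n × ℝ)) : ℝ≥0∞ :=
  ⨆ (ε : ℝ) (_ : 0 < ε) (y : En n),
    μ {p : En n × ℝ | ‖p.1 - y‖ < ε ∧ 0 < p.2 ∧ p.2 < ε} / ENNReal.ofReal (ε ^ n)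

lemma scale_lemma (n : ℕ) (δ : ℝ) {t : ℝ} (ht : 0 < t) :
    ∫⁻ u : En n, ENNReal.ofReal (t ^ δ * (t + ‖u‖) ^ (-(n:ℝ) - δ)) =
    ∫⁻ u : En n, ENNReal.ofReal ((1 + ‖u‖) ^ (-(n:ℝ) - δ)) := by
  have hfin : Module.finrank ℝ (En n) = n := finrank_euclideanSpace_fin
  have htn : (0:ℝ) < t ^ (n:ℕ) := pow_pos ht n
  have hmap := Measure.map_addHaar_smul (volume : Measure (En n)) ht.ne'
  rw [hfin] at hmap
  have hvol : (volume : Measure (En n)) =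
      ENNReal.ofReal (t ^ (n:ℕ)) • Measure.map (fun x : En n => t • x) volume := by
    rw [hmap, smul_smul, ← ENNReal.ofReal_mul htn.le,
      abs_of_pos (inv_pos.2 htn), mul_inv_cancel₀ htn.ne', ENNReal.ofReal_one, one_smul]
  have hmeas : Measurable fun u : En n =>
      ENNReal.ofReal (t ^ δ * (t + ‖u‖) ^ (-(n:ℝ) - δ)) := by
    apply Measurable.ennreal_ofReal
    apply Measurable.mul measurable_const
    apply Continuous.measurable
    apply Continuous.rpow_const (continuous_const.add continuous_norm)
    intro x; left; exact (by positivity : (0:ℝ) < t + ‖x‖).ne'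
  calc ∫⁻ u : En n, ENNReal.ofReal (t ^ δ * (t + ‖u‖) ^ (-(n:ℝ) - δ))
      = ENNReal.ofReal (t ^ (n:ℕ)) *
        ∫⁻ u, ENNReal.ofReal (t ^ δ * (t + ‖u‖) ^ (-(n:ℝ) - δ))
          ∂(Measure.map (fun x : En n => t • x) volume) := by
        conv_lhs => rw [hvol]
        rw [lintegral_smul_measure, smul_eq_mul]
    _ = ENNReal.ofReal (t ^ (n:ℕ)) *
        ∫⁻ x : En n, ENNReal.ofReal (t ^ δ * (t + ‖t • x‖) ^ (-(n:ℝ) - δ)) := by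
        rw [lintegral_map hmeas (measurable_const_smul t)]
    _ = ENNReal.ofReal (t ^ (n:ℕ)) * ∫⁻ x : En n,
          ENNReal.ofReal (t ^ (-(n:ℝ)) * (1 + ‖x‖) ^ (-(n:ℝ) - δ)) := by
        congr 1
        apply lintegral_congr
        intro x
        congr 1
        have h1 : ‖t • x‖ = t * ‖x‖ := by
          rw [norm_smul, Real.norm_eq_abs, abs_of_pos ht]
        have h2 : (0:ℝ) ≤ 1 + ‖x‖ := by positivity
        rw [h1, ← mul_one_add, Real.mul_rpow ht.le h2, ← mul_assoc,
          ← Real.rpow_add ht]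
        ring_nf
    _ = ENNReal.ofReal (t ^ (n:ℕ)) * (ENNReal.ofReal (t ^ (-(n:ℝ))) *
          ∫⁻ x : En n, ENNReal.ofReal ((1 + ‖x‖) ^ (-(n:ℝ) - δ))) := by
        congr 1
        rw [← lintegral_const_mul' _ _ ENNReal.ofReal_ne_top]
        apply lintegral_congr
        intro x
        rw [← ENNReal.ofReal_mul (Real.rpow_nonneg ht.le _)]
    _ = ∫⁻ x : En n, ENNReal.ofReal ((1 + ‖x‖) ^ (-(n:ℝ) - δ)) := by
        rw [← mul_assoc, ← ENNReal.ofReal_mul htn.le, ← Real.rpow_natCast t n,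
          ← Real.rpow_add ht, add_neg_cancel, Real.rpow_zero, ENNReal.ofReal_one, one_mul]

/-- Pointwise bound on the kernel in the convenient form `A t^δ (t+‖u‖)^{-n-δ}`. -/


lemma kernel_pt (n : ℕ) (δ : ℝ) {A t : ℝ} (ht : 0 < t)
    (K : ℝ → En n → ℂ)
    (hK : ∀ t : ℝ, 0 < t → ∀ z : En n,
        ‖K t z‖ ≤ A * t ^ (-(n : ℝ)) * (1 + ‖z‖ / t) ^ (-(n : ℝ) - δ))
    (u : En n) :
    (‖K t u‖₊ : ℝ≥0∞) ≤ ENNReal.ofReal (A * (t ^ δ * (t + ‖u‖) ^ (-(n:ℝ) - δ))) := by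
  rw [← ENNReal.ofReal_coe_nnreal, coe_nnnorm]
  apply ENNReal.ofReal_le_ofReal
  calc ‖K t u‖ ≤ A * t ^ (-(n:ℝ)) * (1 + ‖u‖ / t) ^ (-(n:ℝ) - δ) := hK t ht u
    _ = A * (t ^ δ * (t + ‖u‖) ^ (-(n:ℝ) - δ)) := by
        have h1 : 1 + ‖u‖ / t = (t + ‖u‖) / t := by field_simp
        rw [h1, Real.div_rpow (by positivity) ht.le]
        have h2 : t ^ (-(n:ℝ)) = t ^ δ * t ^ (-(n:ℝ) - δ) := by
          rw [← Real.rpow_add ht]; ring_nf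
        have h3 : t ^ (-(n:ℝ) - δ) ≠ 0 := (Real.rpow_pos_of_pos ht _).ne'
        rw [h2]
        field_simp


lemma coef_le (n : ℕ) (δ : ℝ) {ε : ℝ} (hε : 0 < ε) (k : ℕ) :
    ε ^ δ * ((2:ℝ)^k * ε) ^ (-(n:ℝ) - δ) * ((2:ℝ)^(k+2) * ε) ^ (n:ℕ) ≤
    (4:ℝ)^(n:ℕ) * ((2:ℝ) ^ (-δ)) ^ k := by
  have h2k : (0:ℝ) < 2^k := by positivity
  rw [Real.mul_rpow h2k.le hε.le, mul_pow]
  have e1 : ((2:ℝ)^k) ^ (-(n:ℝ)-δ) = (2:ℝ) ^ ((k:ℝ) * (-(n:ℝ)-δ)) := by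
    rw [← Real.rpow_natCast (2:ℝ) k, ← Real.rpow_mul (by norm_num)]
  have e2 : ((2:ℝ)^(k+2)) ^ (n:ℕ) = (2:ℝ) ^ ((((k+2)*n : ℕ)):ℝ) := by
    rw [← pow_mul, ← Real.rpow_natCast]
  have e3 : ε ^ (n:ℕ) = ε ^ ((n:ℕ):ℝ) := (Real.rpow_natCast ε n).symm
  have e4 : (4:ℝ)^(n:ℕ) = (2:ℝ) ^ (((2*n : ℕ)):ℝ) := by
    rw [Real.rpow_natCast, pow_mul]; norm_num
  have e5 : ((2:ℝ) ^ (-δ)) ^ k = (2:ℝ) ^ (-δ * (k:ℝ)) := by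
    rw [← Real.rpow_natCast ((2:ℝ) ^ (-δ)) k, ← Real.rpow_mul (by norm_num)]
  rw [e1, e2, e3, e4, e5]
  have lhs_eq : ε ^ δ * ((2:ℝ) ^ ((k:ℝ) * (-(n:ℝ)-δ)) * ε ^ (-(n:ℝ)-δ)) *
      ((2:ℝ) ^ ((((k+2)*n : ℕ)):ℝ) * ε ^ ((n:ℕ):ℝ)) =
      (2:ℝ) ^ ((k:ℝ) * (-(n:ℝ)-δ) + (((k+2)*n : ℕ)):ℝ) *
        ε ^ (δ + (-(n:ℝ)-δ) + ((n:ℕ):ℝ)) := by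
    rw [Real.rpow_add (by norm_num : (0:ℝ) < 2), Real.rpow_add hε, Real.rpow_add hε]
    ring
  rw [lhs_eq]
  have hexp1 : δ + (-(n:ℝ)-δ) + ((n:ℕ):ℝ) = 0 := by ring
  have hexp2 : (k:ℝ) * (-(n:ℝ)-δ) + ((((k+2)*n : ℕ)):ℝ) = ((2*n : ℕ):ℝ) + (-δ * (k:ℝ)) := by
    push_cast; ring
  rw [hexp1, Real.rpow_zero, mul_one, hexp2, Real.rpow_add (by norm_num : (0:ℝ) < 2)]


lemma box_bound {n : ℕ} (μ : Measure (En n × ℝ)) {r : ℝ} (hr : 0 < r) (y : En n) :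
    μ {p : En n × ℝ | ‖p.1 - y‖ < r ∧ 0 < p.2 ∧ p.2 < r} ≤
      carlesonNorm μ * ENNReal.ofReal (r ^ n) := by
  have h : μ {p : En n × ℝ | ‖p.1 - y‖ < r ∧ 0 < p.2 ∧ p.2 < r} /
      ENNReal.ofReal (r ^ n) ≤ carlesonNorm μ := by
    rw [carlesonNorm]
    exact le_iSup_of_le r (le_iSup_of_le hr (le_iSup_of_le y le_rfl))
  exact (ENNReal.div_le_iff_le_mul
    (Or.inl (ENNReal.ofReal_pos.2 (pow_pos hr n)).ne')
    (Or.inl ENNReal.ofReal_ne_top)).mp h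


def annuli (n : ℕ) (ε : ℝ) (y : En n) : ℕ → Set (En n × ℝ)
  | 0 => {p | ‖p.1 - y‖ < 2*ε ∧ 0 < p.2 ∧ p.2 < ε}
  | (k+1) => {p | 2^(k+1)*ε ≤ ‖p.1 - y‖ ∧ ‖p.1 - y‖ < 2^(k+2)*ε ∧ 0 < p.2 ∧ p.2 < ε}


lemma annuli_measurable {n : ℕ} (ε : ℝ) (y : En n) (k : ℕ) : MeasurableSet (annuli n ε y k) := by
  have hnorm : Measurable fun p : En n × ℝ => ‖p.1 - y‖ :=
    ((measurable_fst.sub measurable_const).norm)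
  cases k with
  | zero =>
    exact (measurableSet_lt hnorm measurable_const).inter
      ((measurableSet_lt measurable_const measurable_snd).inter
        (measurableSet_lt measurable_snd measurable_const))
  | succ k =>
    exact (measurableSet_le measurable_const hnorm).inter
      ((measurableSet_lt hnorm measurable_const).inter
        ((measurableSet_lt measurable_const measurable_snd).inter
          (measurableSet_lt measurable_snd measurable_const)))


lemma annuli_cover {n : ℕ} {ε : ℝ} (hε : 0 < ε) (y : En n) :
    {p : En n × ℝ | 0 < p.2 ∧ p.2 < ε} ⊆ ⋃ k, annuli n ε y k := by
  intro p hp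
  set r := ‖p.1 - y‖ with hr
  by_cases h0 : r < 2*ε
  · exact Set.mem_iUnion.2 ⟨0, h0, hp.1, hp.2⟩
  · push_neg at h0
    have hP : ∃ m : ℕ, r < 2^m * ε := by
      obtain ⟨m, hm⟩ := pow_unbounded_of_one_lt (r / ε) (one_lt_two (α := ℝ))
      exact ⟨m, by rwa [div_lt_iff₀ hε] at hm⟩
    set m := Nat.find hP with hm
    have hmlt : r < 2^m * ε := Nat.find_spec hP
    have hm2 : 2 ≤ m := by
      by_contra hc
      push_neg at hc
      interval_cases m <;> [skip; skip] <;> nlinarith [Nat.find_spec hP]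
    obtain ⟨k, hk⟩ : ∃ k, m = k + 2 := ⟨m - 2, by omega⟩
    refine Set.mem_iUnion.2 ⟨k+1, ?_, ?_, hp.1, hp.2⟩
    · have := Nat.find_min hP (m := k+1) (by omega)
      push_neg at this
      exact this
    · rwa [hk] at hmlt


lemma inner_global (n : ℕ) (δ : ℝ) {A t : ℝ} (hA : 0 ≤ A) (ht : 0 < t)
    (K : ℝ → En n → ℂ)
    (hK : ∀ t : ℝ, 0 < t → ∀ z : En n,
        ‖K t z‖ ≤ A * t ^ (-(n : ℝ)) * (1 + ‖z‖ / t) ^ (-(n : ℝ) - δ))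
    (z : En n) (s : Set (En n)) :
    (∫⁻ x in s, (‖K t (x - z)‖₊ : ℝ≥0∞)) ≤
      ENNReal.ofReal A * ∫⁻ u : En n, ENNReal.ofReal ((1 + ‖u‖) ^ (-(n:ℝ) - δ)) := by
  calc (∫⁻ x in s, (‖K t (x - z)‖₊ : ℝ≥0∞))
      ≤ ∫⁻ x : En n, ENNReal.ofReal (A * (t ^ δ * (t + ‖x - z‖) ^ (-(n:ℝ) - δ))) :=
        le_trans (setLIntegral_le_lintegral _ _)
          (lintegral_mono fun x => kernel_pt n δ ht K hK (x - z))
    _ = ENNReal.ofReal A *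
        ∫⁻ x : En n, ENNReal.ofReal (t ^ δ * (t + ‖x - z‖) ^ (-(n:ℝ) - δ)) := by
        rw [← lintegral_const_mul' _ _ ENNReal.ofReal_ne_top]
        apply lintegral_congr
        intro x
        rw [← ENNReal.ofReal_mul hA]
    _ = ENNReal.ofReal A *
        ∫⁻ u : En n, ENNReal.ofReal (t ^ δ * (t + ‖u‖) ^ (-(n:ℝ) - δ)) := by
        rw [lintegral_sub_right_eq_self
          (fun u : En n => ENNReal.ofReal (t ^ δ * (t + ‖u‖) ^ (-(n:ℝ) - δ))) z]
    _ = ENNReal.ofReal A * ∫⁻ u : En n, ENNReal.ofReal ((1 + ‖u‖) ^ (-(n:ℝ) - δ)) := by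
        rw [scale_lemma n δ ht]


lemma inner_far (n : ℕ) (hn : 1 ≤ n) (δ : ℝ) (hδ : 0 < δ) {A t ε d : ℝ}
    (hA : 0 ≤ A) (ht : 0 < t) (htε : t < ε) (hd : 0 < d)
    (K : ℝ → En n → ℂ)
    (hK : ∀ t : ℝ, 0 < t → ∀ z : En n,
        ‖K t z‖ ≤ A * t ^ (-(n : ℝ)) * (1 + ‖z‖ / t) ^ (-(n : ℝ) - δ))
    (z y : En n) (hfar : ∀ x : En n, ‖x - y‖ < ε → d ≤ ‖x - z‖) :
    (∫⁻ x in {x : En n | ‖x - y‖ < ε}, (‖K t (x - z)‖₊ : ℝ≥0∞)) ≤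
      ENNReal.ofReal (A * (ε ^ δ * d ^ (-(n:ℝ) - δ))) *
        (ENNReal.ofReal (ε ^ (n:ℕ)) * volume (Metric.ball (0 : En n) 1)) := by
  have hε : 0 < ε := ht.trans htε
  haveI : Nontrivial (En n) := Module.nontrivial_of_finrank_pos
    (by rw [finrank_euclideanSpace_fin]; omega : 0 < Module.finrank ℝ (En n))
  have hset : {x : En n | ‖x - y‖ < ε} = Metric.ball y ε := by
    ext x; simp [Metric.mem_ball, dist_eq_norm]
  have hpt : ∀ x ∈ {x : En n | ‖x - y‖ < ε},
      (‖K t (x - z)‖₊ : ℝ≥0∞) ≤ ENNReal.ofReal (A * (ε ^ δ * d ^ (-(n:ℝ) - δ))) := by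
    intro x hx
    refine le_trans (kernel_pt n δ ht K hK (x - z)) (ENNReal.ofReal_le_ofReal ?_)
    apply mul_le_mul_of_nonneg_left _ hA
    have h1 : t ^ δ ≤ ε ^ δ := Real.rpow_le_rpow ht.le htε.le hδ.le
    have h2 : (t + ‖x - z‖) ^ (-(n:ℝ) - δ) ≤ d ^ (-(n:ℝ) - δ) := by
      apply Real.rpow_le_rpow_of_nonpos hd
      · exact le_trans (hfar x hx) (le_add_of_nonneg_left ht.le)
      · have : (0:ℝ) ≤ (n:ℝ) := Nat.cast_nonneg n
        linarith
    exact mul_le_mul h1 h2 (Real.rpow_nonneg (by positivity) _) (Real.rpow_nonneg hε.le _)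
  calc (∫⁻ x in {x : En n | ‖x - y‖ < ε}, (‖K t (x - z)‖₊ : ℝ≥0∞))
      ≤ ∫⁻ _ in {x : En n | ‖x - y‖ < ε},
          ENNReal.ofReal (A * (ε ^ δ * d ^ (-(n:ℝ) - δ))) := by
        apply setLIntegral_mono' _ hpt
        rw [hset]; exact measurableSet_ball
    _ = ENNReal.ofReal (A * (ε ^ δ * d ^ (-(n:ℝ) - δ))) *
          volume {x : En n | ‖x - y‖ < ε} := setLIntegral_const _ _
    _ = ENNReal.ofReal (A * (ε ^ δ * d ^ (-(n:ℝ) - δ))) *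
          (ENNReal.ofReal (ε ^ (n:ℕ)) * volume (Metric.ball (0 : En n) 1)) := by
        rw [hset, Measure.addHaar_ball volume y hε.le, finrank_euclideanSpace_fin]


/-- **Lemma 4.8 of the paper (after Uchiyama).** If `μ` is a Carleson measure and
`|K_t(z)| ≤ A t^{-n}(1+|z|/t)^{-n-δ}`, then
`∫_{ℝ^n×(0,ε)} (∫_{|x-y|<ε} |K_t(x-z)| dx) dμ(z,t) ≤ C A ε^n ‖μ‖_C`, with `C = C(n,δ)`;
i.e. the measure `(∫ |K_t(x-y)| dμ(y,t)) dx` is again a Carleson measure, with norm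
controlled by `A ‖μ‖_C`. -/
theorem carleson_measure_convolution (n : ℕ) (hn : 1 ≤ n) (δ : ℝ) (hδ : 0 < δ) :
    ∃ C : ℝ≥0, ∀ A : ℝ, 0 < A → ∀ μ : Measure (En n × ℝ), carlesonNorm μ < ⊤ →
      ∀ K : ℝ → En n → ℂ, (Measurable fun p : ℝ × En n => K p.1 p.2) →
      (∀ t : ℝ, 0 < t → ∀ z : En n,
        ‖K t z‖ ≤ A * t ^ (-(n : ℝ)) * (1 + ‖z‖ / t) ^ (-(n : ℝ) - δ)) →
      ∀ ε : ℝ, 0 < ε → ∀ y : En n,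
        (∫⁻ p in {p : En n × ℝ | 0 < p.2 ∧ p.2 < ε},
            (∫⁻ x in {x : En n | ‖x - y‖ < ε}, (‖K p.2 (x - p.1)‖₊ : ℝ≥0∞)) ∂μ) ≤
          C * ENNReal.ofReal A * ENNReal.ofReal (ε ^ n) * carlesonNorm μ := by
  set I := ∫⁻ u : En n, ENNReal.ofReal ((1 + ‖u‖) ^ (-(n:ℝ) - δ)) with hIdef
  have hI : I < ⊤ := by
    have h := finite_integral_one_add_norm (E := En n) (μ := volume) (r := (n:ℝ) + δ)
      (by rw [finrank_euclideanSpace_fin]; linarith)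
    rw [hIdef, show (-(n:ℝ) - δ) = -((n:ℝ) + δ) from by ring]
    exact h
  set V := volume (Metric.ball (0 : En n) 1) with hVdef
  have hV : V < ⊤ := measure_ball_lt_top
  have hgeo : ENNReal.ofReal ((2:ℝ) ^ (-δ)) < 1 := by
    rw [ENNReal.ofReal_lt_one]
    exact Real.rpow_lt_one_of_one_lt_of_neg one_lt_two (neg_neg_of_pos hδ)
  set G := (1 - ENNReal.ofReal ((2:ℝ) ^ (-δ)))⁻¹ with hGdef
  have hG : G < ⊤ := ENNReal.inv_lt_top.2 (tsub_pos_of_lt hgeo)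
  set D := I * ENNReal.ofReal ((2:ℝ) ^ (n:ℕ)) +
    V * ENNReal.ofReal ((4:ℝ) ^ (n:ℕ)) * G with hDdef
  have hDfin : D ≠ ⊤ := by
    apply ENNReal.add_ne_top.2
    constructor
    · exact ENNReal.mul_ne_top hI.ne ENNReal.ofReal_ne_top
    · exact ENNReal.mul_ne_top (ENNReal.mul_ne_top hV.ne ENNReal.ofReal_ne_top) hG.ne
  refine ⟨D.toNNReal, ?_⟩
  intro A hA μ hμ K hKmeas hK ε hε y
  set X := ENNReal.ofReal A * ENNReal.ofReal (ε ^ n) * carlesonNorm μ with hXdef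
  -- bound on the k = 0 piece
  have bound0 : (∫⁻ p in annuli n ε y 0,
      (∫⁻ x in {x : En n | ‖x - y‖ < ε}, (‖K p.2 (x - p.1)‖₊ : ℝ≥0∞)) ∂μ) ≤
      X * (I * ENNReal.ofReal ((2:ℝ) ^ (n:ℕ))) := by
    have h1 : ∀ p ∈ annuli n ε y 0,
        (∫⁻ x in {x : En n | ‖x - y‖ < ε}, (‖K p.2 (x - p.1)‖₊ : ℝ≥0∞)) ≤
        ENNReal.ofReal A * I := by
      intro p hp
      exact inner_global n δ hA.le hp.2.1 K hK p.1 _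
    calc (∫⁻ p in annuli n ε y 0,
        (∫⁻ x in {x : En n | ‖x - y‖ < ε}, (‖K p.2 (x - p.1)‖₊ : ℝ≥0∞)) ∂μ)
        ≤ ∫⁻ _ in annuli n ε y 0, (ENNReal.ofReal A * I) ∂μ :=
          setLIntegral_mono' (annuli_measurable ε y 0) h1
      _ = (ENNReal.ofReal A * I) * μ (annuli n ε y 0) := setLIntegral_const _ _
      _ ≤ (ENNReal.ofReal A * I) * (carlesonNorm μ * ENNReal.ofReal ((2*ε) ^ n)) := by
          apply mul_le_mul_right
          refine le_trans (measure_mono ?_) (box_bound μ (by positivity) y)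
          intro p hp
          exact ⟨hp.1, hp.2.1, by linarith [hp.2.2]⟩
      _ = X * (I * ENNReal.ofReal ((2:ℝ) ^ (n:ℕ))) := by
          rw [mul_pow, ENNReal.ofReal_mul (by positivity), hXdef]
          ring
  -- bound on the k + 1 pieces
  have boundk : ∀ k : ℕ, (∫⁻ p in annuli n ε y (k+1),
      (∫⁻ x in {x : En n | ‖x - y‖ < ε}, (‖K p.2 (x - p.1)‖₊ : ℝ≥0∞)) ∂μ) ≤
      X * (V * ENNReal.ofReal ((4:ℝ) ^ (n:ℕ) * ((2:ℝ) ^ (-δ)) ^ k)) := by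
    intro k
    have h2k : (1:ℝ) ≤ 2 ^ k := one_le_pow₀ (by norm_num)
    have hd : (0:ℝ) < 2 ^ k * ε := by positivity
    have h1 : ∀ p ∈ annuli n ε y (k+1),
        (∫⁻ x in {x : En n | ‖x - y‖ < ε}, (‖K p.2 (x - p.1)‖₊ : ℝ≥0∞)) ≤
        ENNReal.ofReal (A * (ε ^ δ * ((2:ℝ)^k * ε) ^ (-(n:ℝ) - δ))) *
          (ENNReal.ofReal (ε ^ (n:ℕ)) * V) := by
      intro p hp
      obtain ⟨hp1, hp2, hp3, hp4⟩ := hp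
      apply inner_far n hn δ hδ hA.le hp3 hp4 hd K hK p.1 y
      intro x hx
      have h5 : ‖p.1 - y‖ - ‖x - y‖ ≤ ‖x - p.1‖ := by
        have := norm_sub_norm_le (p.1 - y) (x - y)
        have he : p.1 - y - (x - y) = p.1 - x := by abel
        rw [he] at this
        rwa [norm_sub_rev p.1 x] at this
      have h6 : (2:ℝ)^(k+1)*ε - ε ≥ 2^k * ε := by
        have : (2:ℝ)^(k+1) = 2 * 2^k := by ring
        nlinarith
      linarith
    set c1 : ℝ := ε ^ δ * ((2:ℝ)^k * ε) ^ (-(n:ℝ) - δ) with hc1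
    set c2 : ℝ := ((2:ℝ)^(k+2) * ε) ^ (n:ℕ) with hc2
    have hc1n : 0 ≤ c1 := by rw [hc1]; positivity
    calc (∫⁻ p in annuli n ε y (k+1),
        (∫⁻ x in {x : En n | ‖x - y‖ < ε}, (‖K p.2 (x - p.1)‖₊ : ℝ≥0∞)) ∂μ)
        ≤ ∫⁻ _ in annuli n ε y (k+1),
            (ENNReal.ofReal (A * c1) * (ENNReal.ofReal (ε ^ (n:ℕ)) * V)) ∂μ :=
          setLIntegral_mono' (annuli_measurable ε y (k+1)) h1
      _ = (ENNReal.ofReal (A * c1) * (ENNReal.ofReal (ε ^ (n:ℕ)) * V)) *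
            μ (annuli n ε y (k+1)) :=
          setLIntegral_const _ _
      _ ≤ (ENNReal.ofReal (A * c1) * (ENNReal.ofReal (ε ^ (n:ℕ)) * V)) *
            (carlesonNorm μ * ENNReal.ofReal c2) := by
          apply mul_le_mul_right
          refine le_trans (measure_mono ?_) (box_bound μ (by positivity) y)
          intro p hp
          obtain ⟨hp1, hp2, hp3, hp4⟩ := hp
          have h7 : (1:ℝ) ≤ 2^(k+2) := one_le_pow₀ (by norm_num)
          exact ⟨hp2, hp3, by nlinarith⟩
      _ = X * V * (ENNReal.ofReal c1 * ENNReal.ofReal c2) := by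
          rw [ENNReal.ofReal_mul hA.le, hXdef]
          ring
      _ = X * V * ENNReal.ofReal (c1 * c2) := by
          rw [ENNReal.ofReal_mul hc1n]
      _ ≤ X * V * ENNReal.ofReal ((4:ℝ)^(n:ℕ) * ((2:ℝ) ^ (-δ)) ^ k) := by
          apply mul_le_mul_right
          apply ENNReal.ofReal_le_ofReal
          rw [hc1, hc2]
          exact coef_le n δ hε k
      _ = X * (V * ENNReal.ofReal ((4:ℝ) ^ (n:ℕ) * ((2:ℝ) ^ (-δ)) ^ k)) := by
          ring
  -- put everything together
  calc (∫⁻ p in {p : En n × ℝ | 0 < p.2 ∧ p.2 < ε},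
        (∫⁻ x in {x : En n | ‖x - y‖ < ε}, (‖K p.2 (x - p.1)‖₊ : ℝ≥0∞)) ∂μ)
      ≤ ∫⁻ p in ⋃ k, annuli n ε y k,
        (∫⁻ x in {x : En n | ‖x - y‖ < ε}, (‖K p.2 (x - p.1)‖₊ : ℝ≥0∞)) ∂μ :=
        lintegral_mono_set (annuli_cover hε y)
    _ ≤ ∑' k : ℕ, ∫⁻ p in annuli n ε y k,
        (∫⁻ x in {x : En n | ‖x - y‖ < ε}, (‖K p.2 (x - p.1)‖₊ : ℝ≥0∞)) ∂μ :=
        lintegral_iUnion_le _ _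
    _ ≤ X * (I * ENNReal.ofReal ((2:ℝ) ^ (n:ℕ))) +
        ∑' k : ℕ, X * (V * ENNReal.ofReal ((4:ℝ) ^ (n:ℕ) * ((2:ℝ) ^ (-δ)) ^ k)) := by
        rw [tsum_eq_zero_add' ENNReal.summable]
        exact add_le_add bound0 (ENNReal.tsum_le_tsum boundk)
    _ = X * D := by
        have hs : ∑' k : ℕ, X * (V * ENNReal.ofReal ((4:ℝ) ^ (n:ℕ) * ((2:ℝ) ^ (-δ)) ^ k)) =
            X * (V * ENNReal.ofReal ((4:ℝ) ^ (n:ℕ)) * G) := by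
          have h1 : ∀ k : ℕ, ENNReal.ofReal ((4:ℝ) ^ (n:ℕ) * ((2:ℝ) ^ (-δ)) ^ k) =
              ENNReal.ofReal ((4:ℝ) ^ (n:ℕ)) * (ENNReal.ofReal ((2:ℝ) ^ (-δ))) ^ k := by
            intro k
            rw [ENNReal.ofReal_mul (by positivity),
              ENNReal.ofReal_pow (by positivity : (0:ℝ) ≤ (2:ℝ) ^ (-δ))]
          simp_rw [h1]
          rw [ENNReal.tsum_mul_left]
          congr 1
          rw [ENNReal.tsum_mul_left, ENNReal.tsum_mul_left, ENNReal.tsum_geometric, hGdef]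
          ring
        rw [hs, hDdef]
        ring
    _ = ↑D.toNNReal * ENNReal.ofReal A * ENNReal.ofReal (ε ^ n) * carlesonNorm μ := by
        rw [ENNReal.coe_toNNReal hDfin, hXdef]
        ring

end
end
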